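/- arXiv:2003.13067 — 14 statements merged into one kernel-verified Lean document; each statement's English description precedes it below -/
import Mathlib

section
/- For every state s ≤ θ_N and every non-merging action a with a < s, one has H(a) ≤ G(s); consequently the one-stage optimal value V_N(s) := max( G(s), sup_{a < s} H(a) ) equals G(s), i.e., for the last vehicle the merging action a = s is optimal whenever the predicted headway satisfies s ≤ θ_N. -/
open MeasureTheory Set Filter

theorem stmt_2
    (cN t₀ : ℝ) (G : ℝ → ℝ)
    (hcN : cN < 0) (ht₀ : 0 < t₀)
    (hGcont : ContinuousOn G (Iio t₀))
    (hGinc : StrictMonoOn G (Iic cN))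
    (hGdec : StrictAntiOn G (Ico cN t₀))
    (hGtop : Tendsto G (nhdsWithin t₀ (Iio t₀)) atBot)
    (hGbot : Tendsto G atBot atBot)
    (hG0 : 0 < G 0)
    (θN : ℝ) (hθN : θN ∈ Ioo cN t₀) (hGθN : G θN = G cN - G 0)
    (s : ℝ) (hs : s ≤ θN) :
    (∀ a < s, G a - G 0 ≤ G s) ∧
    max (G s) (sSup ((fun a => G a - G 0) '' Iio s)) = G s := by
  have key : ∀ a < s, G a - G 0 ≤ G s := by
    intro a ha
    rcases le_or_gt s cN with hscN | hscN
    · -- s ≤ cN, a < s, strict mono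
      have : G a < G s := hGinc (le_trans ha.le hscN) hscN ha
      linarith
    · -- cN < s ≤ θN < t₀
      have hst : s < t₀ := lt_of_le_of_lt hs hθN.2
      have hGa : G a ≤ G cN := by
        rcases le_or_gt a cN with h | h
        · exact hGinc.monotoneOn h (self_mem_Iic) h
        · exact (hGdec (by constructor <;> [exact le_refl cN; exact lt_trans hcN ht₀]) ⟨h.le, lt_trans ha hst⟩ h).le
      have hGsθ : G θN ≤ G s :=
        (hGdec.antitoneOn ⟨hscN.le, hst⟩ ⟨hθN.1.le, hθN.2⟩ hs)
      linarith [hGθN]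
  refine ⟨key, ?_⟩
  have hne : ((fun a => G a - G 0) '' Iio s).Nonempty :=
    ⟨G (s - 1) - G 0, ⟨s - 1, by simp, rfl⟩⟩
  have hle : sSup ((fun a => G a - G 0) '' Iio s) ≤ G s := by
    apply csSup_le hne
    rintro x ⟨a, ha, rfl⟩
    exact key a ha
  exact max_eq_left hle
end

section
/- For every state s > θ_N: the supremum of H over the non-merging actions, sup_{a < min(s, t₀)} H(a), equals Z_N and is attained at the admissible action a = c_N; moreover if s < t₀ then G(s) < Z_N. Consequently V_N(s) = Z_N and the non-merging action a = c_N is optimal for the last vehicle whenever s > θ_N. -/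
open MeasureTheory Set Filter

theorem stmt_3
    (cN t₀ : ℝ) (G : ℝ → ℝ)
    (hcN : cN < 0) (ht₀ : 0 < t₀)
    (hGcont : ContinuousOn G (Iio t₀))
    (hGinc : StrictMonoOn G (Iic cN))
    (hGdec : StrictAntiOn G (Ico cN t₀))
    (hGtop : Tendsto G (nhdsWithin t₀ (Iio t₀)) atBot)
    (hGbot : Tendsto G atBot atBot)
    (hG0 : 0 < G 0)
    (θN : ℝ) (hθN : θN ∈ Ioo cN t₀) (hGθN : G θN = G cN - G 0)
    (V_N : ℝ → ℝ)
    (hVN : ∀ s, V_N s = if s < t₀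
      then max (G s) (sSup ((fun a => G a - G 0) '' {a | a < s ∧ a < t₀}))
      else sSup ((fun a => G a - G 0) '' Iio t₀))
    (s : ℝ) (hs : θN < s) :
    sSup ((fun a => G a - G 0) '' Iio (min s t₀)) = G cN - G 0 ∧
    cN < min s t₀ ∧
    (s < t₀ → G s < G cN - G 0) ∧
    V_N s = G cN - G 0 := by
  have hcNθ : cN < θN := hθN.1
  have hθt : θN < t₀ := hθN.2
  have hcNs : cN < s := hcNθ.trans hs
  have hcNt : cN < t₀ := hcNθ.trans hθt
  have hmax : ∀ a, a < t₀ → G a ≤ G cN := by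
    intro a ha
    rcases le_or_gt a cN with h | h
    · exact hGinc.monotoneOn (mem_Iic.2 h) (mem_Iic.2 le_rfl) h
    · exact le_of_lt (hGdec ⟨le_rfl, hcNt⟩ ⟨h.le, ha⟩ h)
  have key : ∀ u, cN < u → u ≤ t₀ →
      sSup ((fun a => G a - G 0) '' Iio u) = G cN - G 0 := by
    intro u hu hut
    have hbd : ∀ x ∈ (fun a => G a - G 0) '' Iio u, x ≤ G cN - G 0 := by
      rintro x ⟨a, ha, rfl⟩
      exact sub_le_sub_right (hmax a (lt_of_lt_of_le ha hut)) _
    have hne : ((fun a => G a - G 0) '' Iio u).Nonempty := ⟨G cN - G 0, cN, hu, rfl⟩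
    exact le_antisymm (csSup_le hne hbd)
      (le_csSup ⟨G cN - G 0, hbd⟩ ⟨cN, hu, rfl⟩)
  have hcNmin : cN < min s t₀ := lt_min hcNs hcNt
  have h1 : sSup ((fun a => G a - G 0) '' Iio (min s t₀)) = G cN - G 0 :=
    key _ hcNmin (min_le_right _ _)
  have h3 : s < t₀ → G s < G cN - G 0 := by
    intro hst
    rw [← hGθN]
    exact hGdec ⟨hcNθ.le, hθt⟩ ⟨(hcNθ.trans hs).le, hst⟩ hs
  refine ⟨h1, hcNmin, h3, ?_⟩
  rw [hVN s]
  by_cases hst : s < t₀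
  · rw [if_pos hst]
    have hset : {a | a < s ∧ a < t₀} = Iio (min s t₀) := by
      ext a; simp [lt_min_iff]
    rw [hset, h1, max_eq_right (h3 hst).le]
  · rw [if_neg hst, key _ hcNt le_rfl]
end

section
/- The one-stage optimal value function satisfies V_N(s) = G(s) for all s ≤ θ_N and V_N(s) = Z_N for all s > θ_N. In particular: V_N is antitone (monotonically decreasing) on [c_N, ∞); V_N attains its global maximum Z_N + G(0) exactly at s = c_N; V_N(y) = Z_N for y ≥ θ_N and V_N(y) > Z_N for c_N ≤ y < θ_N; and the optimal one-stage policy is threshold-based: merge (a = s) if s ≤ θ_N, otherwise take the non-merging action a = c_N. -/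
open MeasureTheory Set Filter

theorem stmt_4
    (cN t₀ : ℝ) (G : ℝ → ℝ)
    (hcN : cN < 0) (ht₀ : 0 < t₀)
    (hGcont : ContinuousOn G (Iio t₀))
    (hGinc : StrictMonoOn G (Iic cN))
    (hGdec : StrictAntiOn G (Ico cN t₀))
    (hGtop : Tendsto G (nhdsWithin t₀ (Iio t₀)) atBot)
    (hGbot : Tendsto G atBot atBot)
    (hG0 : 0 < G 0)
    (θN : ℝ) (hθN : θN ∈ Ioo cN t₀) (hGθN : G θN = G cN - G 0)
    (V_N : ℝ → ℝ)
    (hVN : ∀ s, V_N s = if s < t₀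
      then max (G s) (sSup ((fun a => G a - G 0) '' {a | a < s ∧ a < t₀}))
      else sSup ((fun a => G a - G 0) '' Iio t₀)) :
    (∀ s, s ≤ θN → V_N s = G s) ∧
    (∀ s, θN < s → V_N s = G cN - G 0) ∧
    AntitoneOn V_N (Ici cN) ∧
    (∀ s, V_N s ≤ (G cN - G 0) + G 0) ∧
    (∀ s, V_N s = (G cN - G 0) + G 0 ↔ s = cN) ∧
    (∀ y, θN ≤ y → V_N y = G cN - G 0) ∧
    (∀ y, cN ≤ y → y < θN → G cN - G 0 < V_N y) := by
  obtain ⟨hcθ, hθt⟩ := hθN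
  have hct : cN < t₀ := hcθ.trans hθt
  -- global upper bound
  have hub : ∀ a, a < t₀ → G a - G 0 ≤ G cN - G 0 := by
    intro a ha
    rcases le_or_gt a cN with h | h
    · exact sub_le_sub_right (hGinc.monotoneOn (mem_Iic.2 h) (mem_Iic.2 le_rfl) h) _
    · exact sub_le_sub_right
        (hGdec.antitoneOn ⟨le_rfl, hct⟩ ⟨h.le, ha⟩ h.le) _
  -- sup equals Z_N when cN < s
  have hsup : ∀ s, cN < s → sSup ((fun a => G a - G 0) '' {a | a < s ∧ a < t₀})
      = G cN - G 0 := by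
    intro s hs
    have hmem : G cN - G 0 ∈ (fun a => G a - G 0) '' {a | a < s ∧ a < t₀} :=
      ⟨cN, ⟨hs, hct⟩, rfl⟩
    refine le_antisymm ?_ (le_csSup ⟨G cN - G 0, ?_⟩ hmem)
    · refine csSup_le ⟨_, hmem⟩ ?_
      rintro _ ⟨a, ⟨_, ha2⟩, rfl⟩; exact hub a ha2
    · rintro _ ⟨a, ⟨_, ha2⟩, rfl⟩; exact hub a ha2
  have hsup' : sSup ((fun a => G a - G 0) '' Iio t₀) = G cN - G 0 := by
    have hmem : G cN - G 0 ∈ (fun a => G a - G 0) '' Iio t₀ := ⟨cN, hct, rfl⟩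
    refine le_antisymm ?_ (le_csSup ⟨G cN - G 0, ?_⟩ hmem)
    · refine csSup_le ⟨_, hmem⟩ ?_
      rintro _ ⟨a, ha, rfl⟩; exact hub a ha
    · rintro _ ⟨a, ha, rfl⟩; exact hub a ha
  -- V = G on s ≤ θN
  have hVle : ∀ s, s ≤ θN → V_N s = G s := by
    intro s hs
    have hst : s < t₀ := lt_of_le_of_lt hs hθt
    rw [hVN s, if_pos hst, max_eq_left]
    rcases le_or_gt s cN with h | h
    · refine csSup_le ⟨G (s - 1) - G 0, ⟨s - 1, ⟨by linarith, by linarith⟩, rfl⟩⟩ ?_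
      rintro _ ⟨a, ⟨ha1, _⟩, rfl⟩
      have : G a < G s := hGinc (mem_Iic.2 (by linarith)) (mem_Iic.2 h) ha1
      show G a - G 0 ≤ G s
      linarith
    · rw [hsup s h]
      rw [← hGθN]
      rcases eq_or_lt_of_le hs with h' | h'
      · rw [h']
      · exact (hGdec ⟨h.le, hst⟩ ⟨hcθ.le, hθt⟩ h').le
  -- V = Z_N on s > θN
  have hVgt : ∀ s, θN < s → V_N s = G cN - G 0 := by
    intro s hs
    rw [hVN s]
    split_ifs with hst
    · rw [hsup s (hcθ.trans hs), max_eq_right]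
      rw [← hGθN]
      exact (hGdec ⟨hcθ.le, hθt⟩ ⟨hcθ.le.trans hs.le, hst⟩ hs).le
    · exact hsup'
  have hVθ : ∀ y, θN ≤ y → V_N y = G cN - G 0 := by
    intro y hy
    rcases eq_or_lt_of_le hy with h | h
    · rw [← h, hVle θN le_rfl, hGθN]
    · exact hVgt y h
  have hGlt : ∀ y, cN ≤ y → y < θN → G cN - G 0 < V_N y := by
    intro y h1 h2
    rw [hVle y h2.le, ← hGθN]
    exact hGdec ⟨h1, h2.trans hθt⟩ ⟨hcθ.le, hθt⟩ h2
  refine ⟨hVle, hVgt, ?_, ?_, ?_, hVθ, hGlt⟩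
  · -- antitone
    intro x hx y hy hxy
    rcases le_or_gt y θN with hyθ | hyθ
    · rw [hVle x (hxy.trans hyθ), hVle y hyθ]
      exact hGdec.antitoneOn ⟨hx, lt_of_le_of_lt (hxy.trans hyθ) hθt⟩
        ⟨hy, lt_of_le_of_lt hyθ hθt⟩ hxy
    · rw [hVgt y hyθ]
      rcases le_or_gt x θN with hxθ | hxθ
      · rw [hVle x hxθ, ← hGθN]
        exact hGdec.antitoneOn ⟨hx, lt_of_le_of_lt hxθ hθt⟩ ⟨hcθ.le, hθt⟩ hxθ
      · rw [hVgt x hxθ]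
  · -- max value bound
    intro s
    have : (G cN - G 0) + G 0 = G cN := by ring
    rw [this]
    rcases le_or_gt s θN with h | h
    · rw [hVle s h]
      rcases le_or_gt s cN with h' | h'
      · exact hGinc.monotoneOn (mem_Iic.2 h') (mem_Iic.2 le_rfl) h'
      · exact hGdec.antitoneOn ⟨le_rfl, hct⟩ ⟨h'.le, lt_of_le_of_lt h hθt⟩ h'.le
    · rw [hVgt s h]; linarith
  · -- equality iff s = cN
    intro s
    have he : (G cN - G 0) + G 0 = G cN := by ring
    rw [he]
    constructor
    · intro h
      by_contra hne
      rcases le_or_gt s θN with hs | hs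
      · rw [hVle s hs] at h
        rcases lt_or_gt_of_ne hne with h' | h'
        · have : G s < G cN := hGinc (mem_Iic.2 h'.le) (mem_Iic.2 le_rfl) h'
          linarith
        · have : G s < G cN :=
            hGdec ⟨le_rfl, hct⟩ ⟨h'.le, lt_of_le_of_lt hs hθt⟩ h'
          linarith
      · rw [hVgt s hs] at h; linarith
    · rintro rfl
      exact hVle _ hcθ.le
end

section
/- Let Z ∈ ℝ and let V : ℝ → ℝ be measurable, bounded below on [r, ∞) for every real r, with V(y) ≤ Z + G(0) for all y ∈ ℝ and V(y) ≥ Z for all y ≥ c_N. Then J(s) := G(s) + γ ∫₀^∞ f(x) V(s + x) dx satisfies J(s) < J(c_N) for every s ≤ θ'_N. -/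
open MeasureTheory Set Filter

theorem stmt_6
    (cN t₀ : ℝ) (G : ℝ → ℝ)
    (hcN : cN < 0) (ht₀ : 0 < t₀)
    (hGcont : ContinuousOn G (Iio t₀))
    (hGinc : StrictMonoOn G (Iic cN))
    (hGdec : StrictAntiOn G (Ico cN t₀))
    (hGtop : Tendsto G (nhdsWithin t₀ (Iio t₀)) atBot)
    (hGbot : Tendsto G atBot atBot)
    (hG0 : 0 < G 0)
    (θN' : ℝ) (hθN' : θN' < cN) (hGθN' : G θN' = G cN - G 0)
    (f : ℝ → ℝ) (γ : ℝ)
    (hfm : Measurable f) (hf0 : ∀ x ≤ 0, f x = 0) (hfnn : ∀ x, 0 ≤ f x)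
    (hf1 : (∫ x in Ioi (0:ℝ), f x) = 1) (hγ : γ ∈ Ioo (0:ℝ) 1)
    (Z : ℝ) (V : ℝ → ℝ) (hVm : Measurable V)
    (hVlb : ∀ r : ℝ, BddBelow (V '' Ici r))
    (hVub : ∀ y, V y ≤ Z + G 0)
    (hVge : ∀ y, cN ≤ y → Z ≤ V y)
    (J : ℝ → ℝ) (hJ : ∀ s, J s = G s + γ * ∫ x in Ioi (0:ℝ), f x * V (s + x)) :
    ∀ s, s ≤ θN' → J s < J cN := by
  intro s hs
  obtain ⟨hγ0, hγ1⟩ := hγ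
  have hfint : IntegrableOn f (Ioi (0:ℝ)) := by
    by_contra h
    rw [integral_undef h] at hf1
    exact one_ne_zero hf1.symm
  have key : ∀ t : ℝ, IntegrableOn (fun x => f x * V (t + x)) (Ioi (0:ℝ)) := by
    intro t
    obtain ⟨m, hm⟩ := hVlb t
    set C := max |m| |Z + G 0| with hC
    have hmeas : AEStronglyMeasurable (fun x => f x * V (t + x))
        (volume.restrict (Ioi (0:ℝ))) :=
      (hfm.mul (hVm.comp (measurable_const.add measurable_id))).aestronglyMeasurable
    refine Integrable.mono' (hfint.const_mul C) hmeas ?_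
    refine (ae_restrict_iff' measurableSet_Ioi).mpr (Filter.Eventually.of_forall ?_)
    intro x hx
    have hVmem : m ≤ V (t + x) := hm ⟨t + x, by simp [le_add_of_nonneg_right (le_of_lt (mem_Ioi.mp hx))], rfl⟩
    have hVub' : V (t + x) ≤ Z + G 0 := hVub _
    have habs : |V (t + x)| ≤ C := by
      rcases abs_cases (V (t + x)) with ⟨h1, h2⟩ | ⟨h1, h2⟩
      · exact h1.symm ▸ le_trans (le_trans hVub' (le_abs_self _)) (le_max_right _ _)
      · rw [h1]
        have : -V (t + x) ≤ |m| := by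
          rcases abs_cases m with ⟨ha, hb⟩ | ⟨ha, hb⟩ <;> linarith
        exact le_trans this (le_max_left _ _)
    calc ‖f x * V (t + x)‖ = f x * |V (t + x)| := by
          rw [norm_mul, Real.norm_eq_abs, Real.norm_eq_abs, abs_of_nonneg (hfnn x)]
      _ ≤ f x * C := mul_le_mul_of_nonneg_left habs (hfnn x)
      _ = C * f x := mul_comm _ _
  have hub : (∫ x in Ioi (0:ℝ), f x * V (s + x)) ≤ Z + G 0 := by
    calc (∫ x in Ioi (0:ℝ), f x * V (s + x))
        ≤ ∫ x in Ioi (0:ℝ), f x * (Z + G 0) :=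
          setIntegral_mono_on (key s) (hfint.mul_const _) measurableSet_Ioi
            (fun x _ => mul_le_mul_of_nonneg_left (hVub _) (hfnn x))
      _ = Z + G 0 := by rw [integral_mul_const, hf1, one_mul]
  have hlb : Z ≤ ∫ x in Ioi (0:ℝ), f x * V (cN + x) := by
    calc Z = ∫ x in Ioi (0:ℝ), f x * Z := by rw [integral_mul_const, hf1, one_mul]
      _ ≤ ∫ x in Ioi (0:ℝ), f x * V (cN + x) :=
          setIntegral_mono_on (hfint.mul_const _) (key cN) measurableSet_Ioi
            (fun x hx => mul_le_mul_of_nonneg_left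
              (hVge _ (by simp only [mem_Ioi] at hx; linarith)) (hfnn x))
  have hGs : G s ≤ G θN' := by
    rcases eq_or_lt_of_le hs with h | h
    · exact le_of_eq (by rw [h])
    · exact le_of_lt (hGinc (mem_Iic.mpr (by linarith)) (mem_Iic.mpr (le_of_lt hθN')) h)
  have h1 : γ * (∫ x in Ioi (0:ℝ), f x * V (s + x)) ≤ γ * (Z + G 0) :=
    mul_le_mul_of_nonneg_left hub (le_of_lt hγ0)
  have h2 : γ * Z ≤ γ * ∫ x in Ioi (0:ℝ), f x * V (cN + x) :=
    mul_le_mul_of_nonneg_left hlb (le_of_lt hγ0)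
  rw [hJ s, hJ cN]
  nlinarith [hGs, hGθN']
end

section
/- The function J attains its maximum over (-∞, c_N] at some point c'' ∈ (θ'_N, c_N]; in particular the maximum exists and no maximizer lies in (-∞, θ'_N]. -/
open MeasureTheory Set Filter

theorem stmt_7
    (cN t₀ : ℝ) (G : ℝ → ℝ)
    (hcN : cN < 0) (ht₀ : 0 < t₀)
    (hGcont : ContinuousOn G (Iio t₀))
    (hGinc : StrictMonoOn G (Iic cN))
    (hGdec : StrictAntiOn G (Ico cN t₀))
    (hGtop : Tendsto G (nhdsWithin t₀ (Iio t₀)) atBot)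
    (hGbot : Tendsto G atBot atBot)
    (hG0 : 0 < G 0)
    (θN : ℝ) (hθN : θN ∈ Ioo cN t₀) (hGθN : G θN = G cN - G 0)
    (θN' : ℝ) (hθN' : θN' < cN) (hGθN' : G θN' = G cN - G 0)
    (f : ℝ → ℝ) (γ : ℝ)
    (hfm : Measurable f) (hf0 : ∀ x ≤ 0, f x = 0) (hfnn : ∀ x, 0 ≤ f x)
    (hf1 : (∫ x in Ioi (0:ℝ), f x) = 1) (hγ : γ ∈ Ioo (0:ℝ) 1)
    (hfpos : ∀ᵐ x ∂volume, 0 < x → 0 < f x)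
    (Z θ : ℝ) (hθ : θ ∈ Ioc cN θN)
    (V : ℝ → ℝ) (hVcont : Continuous V)
    (hVub : ∀ y, V y ≤ Z + G 0)
    (hVlb : ∀ r : ℝ, BddBelow (V '' Ici r))
    (hVanti : AntitoneOn V (Ici cN))
    (hVZ : ∀ y, θ ≤ y → V y = Z)
    (hVgt : ∀ y, cN ≤ y → y < θ → Z < V y)
    (c' : ℝ) (hc' : c' ∈ Ioc θN' cN) (hVc' : V c' = Z + G 0)
    (J : ℝ → ℝ) (hJ : ∀ s, J s = G s + γ * ∫ x in Ioi (0:ℝ), f x * V (s + x)) :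
    ∃ c'' ∈ Ioc θN' cN,
      (∀ s ∈ Iic cN, J s ≤ J c'') ∧
      (∀ s ∈ Iic θN', J s < J c'') := by
  obtain ⟨hγ0, hγ1⟩ := hγ
  set K := Z + G 0 with hK
  have hfint : IntegrableOn f (Ioi (0:ℝ)) := by
    by_contra h
    rw [MeasureTheory.integral_undef h] at hf1
    norm_num at hf1
  set I : ℝ → ℝ := fun s => ∫ x in Ioi (0:ℝ), f x * V (s + x) with hIdef
  have hVgeZ : ∀ y, cN ≤ y → Z ≤ V y := by
    intro y hy
    rcases lt_or_ge y θ with h | h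
    · exact (hVgt y hy h).le
    · exact (hVZ y h).ge
  have hVbd : ∀ r : ℝ, ∃ C : ℝ, 0 ≤ C ∧ ∀ y, r ≤ y → |V y| ≤ C := by
    intro r
    obtain ⟨m, hm⟩ := hVlb r
    refine ⟨max |m| |K|, le_trans (abs_nonneg m) (le_max_left _ _), fun y hy => ?_⟩
    have h1 : m ≤ V y := hm ⟨y, hy, rfl⟩
    have h2 : V y ≤ K := hVub y
    rw [abs_le]
    refine ⟨?_, h2.trans ((le_abs_self K).trans (le_max_right _ _))⟩
    calc -(max |m| |K|) ≤ -|m| := neg_le_neg (le_max_left _ _)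
      _ ≤ m := neg_abs_le m
      _ ≤ V y := h1
  have hmeas : ∀ s : ℝ, AEStronglyMeasurable (fun x => f x * V (s + x))
      (volume.restrict (Ioi (0:ℝ))) := fun s =>
    ((hfm.mul ((hVcont.comp (continuous_const.add continuous_id)).measurable)).aestronglyMeasurable).restrict
  have hint : ∀ s : ℝ, IntegrableOn (fun x => f x * V (s + x)) (Ioi (0:ℝ)) := by
    intro s
    obtain ⟨C, hC0, hC⟩ := hVbd s
    refine Integrable.mono' (hfint.mul_const C) (hmeas s) ?_
    filter_upwards [ae_restrict_mem measurableSet_Ioi] with x hx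
    have hb : |V (s + x)| ≤ C := hC _ (le_add_of_nonneg_right hx.le)
    calc ‖f x * V (s + x)‖ = f x * |V (s + x)| := by
          rw [norm_mul, Real.norm_eq_abs, Real.norm_eq_abs, abs_of_nonneg (hfnn x)]
      _ ≤ f x * C := mul_le_mul_of_nonneg_left hb (hfnn x)
  have hIub : ∀ s, I s ≤ K := by
    intro s
    have h1 : I s ≤ ∫ x in Ioi (0:ℝ), f x * K :=
      integral_mono (hint s) (hfint.mul_const K)
        (fun x => mul_le_mul_of_nonneg_left (hVub _) (hfnn x))
    rwa [integral_mul_const, hf1, one_mul] at h1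
  have hIlbcN : Z ≤ I cN := by
    have h1 : (∫ x in Ioi (0:ℝ), f x * Z) ≤ I cN := by
      refine integral_mono_ae (hfint.mul_const Z) (hint cN) ?_
      filter_upwards [ae_restrict_mem measurableSet_Ioi] with x hx
      exact mul_le_mul_of_nonneg_left (hVgeZ _ (le_add_of_nonneg_right hx.le)) (hfnn x)
    rwa [integral_mul_const, hf1, one_mul] at h1
  have hIcont : Continuous I := by
    rw [continuous_iff_continuousAt]
    intro s₀
    obtain ⟨C, hC0, hC⟩ := hVbd (s₀ - 1)
    apply continuousAt_of_dominated (bound := fun x => f x * C)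
    · exact Filter.Eventually.of_forall hmeas
    · filter_upwards [Metric.ball_mem_nhds s₀ one_pos] with s hs
      rw [Metric.mem_ball, Real.dist_eq] at hs
      filter_upwards [ae_restrict_mem measurableSet_Ioi] with x hx
      have hsx : s₀ - 1 ≤ s + x := by
        have h := abs_sub_lt_iff.mp hs
        have := (mem_Ioi.mp hx).le
        linarith [h.1, h.2]
      have hb : |V (s + x)| ≤ C := hC _ hsx
      calc ‖f x * V (s + x)‖ = f x * |V (s + x)| := by
            rw [norm_mul, Real.norm_eq_abs, Real.norm_eq_abs, abs_of_nonneg (hfnn x)]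
        _ ≤ f x * C := mul_le_mul_of_nonneg_left hb (hfnn x)
    · exact hfint.mul_const C
    · refine Filter.Eventually.of_forall (fun x => ?_)
      exact (continuous_const.mul (hVcont.comp (continuous_id.add continuous_const))).continuousAt
  have hkey : ∀ s, s ≤ θN' → J s < J cN := by
    intro s hs
    have h1 : J s ≤ G s + γ * K := by
      rw [hJ s]
      have := hIub s
      nlinarith
    have h2 : G s ≤ G θN' :=
      hGinc.monotoneOn (le_trans hs hθN'.le) hθN'.le hs
    have h3 : G cN + γ * Z ≤ J cN := by
      rw [hJ cN]
      nlinarith [hIlbcN]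
    have h4 : G θN' + γ * K < G cN + γ * Z := by
      rw [hGθN', hK]; nlinarith
    linarith
  have hJcont : ContinuousOn J (Icc θN' cN) := by
    have hc : ContinuousOn (fun s => G s + γ * I s) (Icc θN' cN) := by
      refine ContinuousOn.add (hGcont.mono ?_) ((continuous_const.mul hIcont).continuousOn)
      intro x hx
      exact lt_of_le_of_lt hx.2 (hcN.trans ht₀)
    exact hc.congr (fun s _ => hJ s)
  obtain ⟨c'', hc''mem, hc''max⟩ :=
    isCompact_Icc.exists_isMaxOn (nonempty_Icc.mpr hθN'.le) hJcont
  have hJcN_le : J cN ≤ J c'' := hc''max ⟨hθN'.le, le_refl _⟩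
  have hstrict : ∀ s ∈ Iic θN', J s < J c'' :=
    fun s hs => (hkey s hs).trans_le hJcN_le
  have hc''gt : θN' < c'' := by
    by_contra h
    push_neg at h
    exact absurd (hstrict c'' h) (lt_irrefl _)
  refine ⟨c'', ⟨hc''gt, hc''mem.2⟩, ?_, hstrict⟩
  intro s hs
  rcases le_or_gt s θN' with h | h
  · exact (hstrict s h).le
  · exact hc''max ⟨h.le, hs⟩
end

section
/- Set Z'' := (max_{s ≤ c_N} J(s)) − G(0), the maximum being attained. Then Z'' > J(θ_N). -/
open MeasureTheory Set Filter

theorem stmt_8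
    (cN t₀ : ℝ) (G : ℝ → ℝ)
    (hcN : cN < 0) (ht₀ : 0 < t₀)
    (hGcont : ContinuousOn G (Iio t₀))
    (hGinc : StrictMonoOn G (Iic cN))
    (hGdec : StrictAntiOn G (Ico cN t₀))
    (hGtop : Tendsto G (nhdsWithin t₀ (Iio t₀)) atBot)
    (hGbot : Tendsto G atBot atBot)
    (hG0 : 0 < G 0)
    (θN : ℝ) (hθN : θN ∈ Ioo cN t₀) (hGθN : G θN = G cN - G 0)
    (θN' : ℝ) (hθN' : θN' < cN) (hGθN' : G θN' = G cN - G 0)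
    (f : ℝ → ℝ) (γ : ℝ)
    (hfm : Measurable f) (hf0 : ∀ x ≤ 0, f x = 0) (hfnn : ∀ x, 0 ≤ f x)
    (hf1 : (∫ x in Ioi (0:ℝ), f x) = 1) (hγ : γ ∈ Ioo (0:ℝ) 1)
    (hfpos : ∀ᵐ x ∂volume, 0 < x → 0 < f x)
    (Z θ : ℝ) (hθ : θ ∈ Ioc cN θN)
    (V : ℝ → ℝ) (hVcont : Continuous V)
    (hVub : ∀ y, V y ≤ Z + G 0)
    (hVlb : ∀ r : ℝ, BddBelow (V '' Ici r))
    (hVanti : AntitoneOn V (Ici cN))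
    (hVZ : ∀ y, θ ≤ y → V y = Z)
    (hVgt : ∀ y, cN ≤ y → y < θ → Z < V y)
    (c' : ℝ) (hc' : c' ∈ Ioc θN' cN) (hVc' : V c' = Z + G 0)
    (J : ℝ → ℝ) (hJ : ∀ s, J s = G s + γ * ∫ x in Ioi (0:ℝ), f x * V (s + x))
    (c'' : ℝ) (hc'' : c'' ∈ Iic cN)
    (hmax : ∀ s ∈ Iic cN, J s ≤ J c'') :
    J θN < J c'' - G 0 := by
  obtain ⟨hθ1, hθ2⟩ := hθ
  obtain ⟨hγ0, hγ1⟩ := hγ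
  have hfint : IntegrableOn f (Ioi (0:ℝ)) := by
    by_contra h
    rw [MeasureTheory.integral_undef h] at hf1
    exact one_ne_zero hf1.symm
  obtain ⟨b, hb⟩ := hVlb cN
  set M : ℝ := max (|Z + G 0|) (|b|) with hM
  have hVbound : ∀ y, cN ≤ y → |V y| ≤ M := by
    intro y hy
    have h1 : V y ≤ Z + G 0 := hVub y
    have h2 : b ≤ V y := hb ⟨y, hy, rfl⟩
    rw [abs_le]
    constructor
    · calc -M ≤ -|b| := neg_le_neg (le_max_right _ _)
        _ ≤ b := neg_abs_le b
        _ ≤ V y := h2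
    · calc V y ≤ Z + G 0 := h1
        _ ≤ |Z + G 0| := le_abs_self _
        _ ≤ M := le_max_left _ _
  have hVmeas : Measurable fun x : ℝ => V (cN + x) :=
    hVcont.measurable.comp (measurable_const.add measurable_id)
  have hIint : IntegrableOn (fun x => f x * V (cN + x)) (Ioi (0:ℝ)) := by
    apply Integrable.mono' (hfint.const_mul M) ((hfm.mul hVmeas).aestronglyMeasurable)
    filter_upwards [MeasureTheory.ae_restrict_mem measurableSet_Ioi] with x hx
    have hx0 : (0:ℝ) < x := hx
    have : |V (cN + x)| ≤ M := hVbound _ (by linarith)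
    calc ‖f x * V (cN + x)‖ = f x * |V (cN + x)| := by
          rw [Real.norm_eq_abs, abs_mul, abs_of_nonneg (hfnn x)]
      _ ≤ f x * M := by nlinarith [hfnn x]
      _ = M * f x := mul_comm _ _
  have hZint : IntegrableOn (fun x => f x * Z) (Ioi (0:ℝ)) := hfint.mul_const Z
  have hgint : IntegrableOn (fun x => f x * (V (cN + x) - Z)) (Ioi (0:ℝ)) := by
    have h := hIint.sub hZint
    apply h.congr
    filter_upwards with x
    simp only [Pi.sub_apply]
    ring
  have hZval : (∫ x in Ioi (0:ℝ), f x * Z) = Z := by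
    rw [MeasureTheory.integral_mul_const Z f, hf1, one_mul]
  have hJθN : J θN = G θN + γ * Z := by
    rw [hJ θN]
    have h1 : (∫ x in Ioi (0:ℝ), f x * V (θN + x)) = ∫ x in Ioi (0:ℝ), f x * Z := by
      apply MeasureTheory.setIntegral_congr_fun measurableSet_Ioi
      intro x hx
      have hx0 : (0:ℝ) < x := hx
      show f x * V (θN + x) = f x * Z
      rw [hVZ (θN + x) (by linarith)]
    rw [h1, hZval]
  have hpos : 0 < ∫ x in Ioi (0:ℝ), f x * (V (cN + x) - Z) := by
    have hnn : 0 ≤ᵐ[Measure.restrict volume (Ioi (0:ℝ))]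
        fun x => f x * (V (cN + x) - Z) := by
      filter_upwards [MeasureTheory.ae_restrict_mem measurableSet_Ioi] with x hx
      have hx0 : (0:ℝ) < x := hx
      have hge : Z ≤ V (cN + x) := by
        rcases le_or_gt θ (cN + x) with h | h
        · rw [hVZ _ h]
        · exact le_of_lt (hVgt _ (by linarith) h)
      have := hfnn x
      simp only [Pi.zero_apply]
      nlinarith
    rw [MeasureTheory.setIntegral_pos_iff_support_of_nonneg_ae hnn hgint]
    have hsub : (Ioo (0:ℝ) (θ - cN) : Set ℝ) ≤ᵐ[volume]
        (((Function.support fun x => f x * (V (cN + x) - Z)) ∩ Ioi 0 : Set ℝ)) := by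
      filter_upwards [hfpos] with x hfx
      intro hx
      obtain ⟨hx1, hx2⟩ := hx
      have hfx' : 0 < f x := hfx hx1
      have hVx : Z < V (cN + x) := hVgt _ (by linarith) (by linarith)
      refine ⟨?_, hx1⟩
      simp only [Function.mem_support]
      exact ne_of_gt (by nlinarith)
    have hmono := MeasureTheory.measure_mono_ae hsub
    have hvol : volume (Ioo (0:ℝ) (θ - cN)) = ENNReal.ofReal (θ - cN) := by
      simp [Real.volume_Ioo]
    have hpos' : (0:ENNReal) < ENNReal.ofReal (θ - cN) := by
      rw [ENNReal.ofReal_pos]; linarith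
    rw [hvol] at hmono
    exact lt_of_lt_of_le hpos' hmono
  have hIgt : Z < ∫ x in Ioi (0:ℝ), f x * V (cN + x) := by
    have hsplit : (∫ x in Ioi (0:ℝ), f x * (V (cN + x) - Z))
        = (∫ x in Ioi (0:ℝ), f x * V (cN + x)) - ∫ x in Ioi (0:ℝ), f x * Z := by
      rw [← MeasureTheory.integral_sub hIint hZint]
      apply MeasureTheory.setIntegral_congr_fun measurableSet_Ioi
      intro x _
      show f x * (V (cN + x) - Z) = f x * V (cN + x) - f x * Z
      ring
    rw [hsplit, hZval] at hpos
    linarith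
  have hJcN : G cN + γ * Z < J cN := by
    rw [hJ cN]
    nlinarith
  have hle : J cN ≤ J c'' := hmax cN (mem_Iic.mpr le_rfl)
  rw [hJθN, hGθN]
  linarith
end

section
/- Set Z'' := (max_{s ≤ c_N} J(s)) − G(0), the maximum being attained. Then Z'' < J(c_N). -/
open MeasureTheory Set Filter

theorem stmt_9
    (cN t₀ : ℝ) (G : ℝ → ℝ)
    (hcN : cN < 0) (ht₀ : 0 < t₀)
    (hGcont : ContinuousOn G (Iio t₀))
    (hGinc : StrictMonoOn G (Iic cN))
    (hGdec : StrictAntiOn G (Ico cN t₀))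
    (hGtop : Tendsto G (nhdsWithin t₀ (Iio t₀)) atBot)
    (hGbot : Tendsto G atBot atBot)
    (hG0 : 0 < G 0)
    (θN : ℝ) (hθN : θN ∈ Ioo cN t₀) (hGθN : G θN = G cN - G 0)
    (θN' : ℝ) (hθN' : θN' < cN) (hGθN' : G θN' = G cN - G 0)
    (f : ℝ → ℝ) (γ : ℝ)
    (hfm : Measurable f) (hf0 : ∀ x ≤ 0, f x = 0) (hfnn : ∀ x, 0 ≤ f x)
    (hf1 : (∫ x in Ioi (0:ℝ), f x) = 1) (hγ : γ ∈ Ioo (0:ℝ) 1)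
    (hfpos : ∀ᵐ x ∂volume, 0 < x → 0 < f x)
    (Z θ : ℝ) (hθ : θ ∈ Ioc cN θN)
    (V : ℝ → ℝ) (hVcont : Continuous V)
    (hVub : ∀ y, V y ≤ Z + G 0)
    (hVlb : ∀ r : ℝ, BddBelow (V '' Ici r))
    (hVanti : AntitoneOn V (Ici cN))
    (hVZ : ∀ y, θ ≤ y → V y = Z)
    (hVgt : ∀ y, cN ≤ y → y < θ → Z < V y)
    (c' : ℝ) (hc' : c' ∈ Ioc θN' cN) (hVc' : V c' = Z + G 0)
    (J : ℝ → ℝ) (hJ : ∀ s, J s = G s + γ * ∫ x in Ioi (0:ℝ), f x * V (s + x))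
    (c'' : ℝ) (hc'' : c'' ∈ Iic cN)
    (hmax : ∀ s ∈ Iic cN, J s ≤ J c'') :
    J c'' - G 0 < J cN := by
  have hfInt : IntegrableOn f (Ioi 0) := by
    by_contra h
    rw [MeasureTheory.integral_undef h] at hf1
    norm_num at hf1
  have hI : ∀ s : ℝ, IntegrableOn (fun x => f x * V (s + x)) (Ioi 0) := by
    intro s
    obtain ⟨lb, hlb⟩ := hVlb s
    set C : ℝ := max |Z + G 0| |lb| with hC
    have hmeas : AEStronglyMeasurable (fun x => f x * V (s + x))
        (volume.restrict (Ioi 0)) :=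
      (hfm.mul (hVcont.measurable.comp (measurable_const.add measurable_id))).aestronglyMeasurable
    refine Integrable.mono (hfInt.const_mul C) hmeas ?_
    refine (ae_restrict_iff' measurableSet_Ioi).mpr (ae_of_all _ ?_)
    intro x hx
    have hx0 : (0:ℝ) < x := hx
    have h1 : lb ≤ V (s + x) :=
      hlb ⟨s + x, by simp [le_add_of_nonneg_right hx0.le], rfl⟩
    have h2 : V (s + x) ≤ Z + G 0 := hVub _
    have habs : |V (s + x)| ≤ C := by
      rw [abs_le]
      constructor
      · have : -C ≤ -|lb| := neg_le_neg (le_max_right _ _)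
        linarith [neg_abs_le lb]
      · exact h2.trans ((le_abs_self _).trans (le_max_left _ _))
    have hC0 : 0 ≤ C := le_trans (abs_nonneg _) (le_max_right _ _)
    calc ‖f x * V (s + x)‖ = f x * |V (s + x)| := by
          rw [norm_mul, Real.norm_eq_abs, Real.norm_eq_abs, abs_of_nonneg (hfnn x)]
      _ ≤ f x * C := mul_le_mul_of_nonneg_left habs (hfnn x)
      _ ≤ ‖C * f x‖ := by rw [mul_comm]; exact le_abs_self _
  have hIub : (∫ x in Ioi (0:ℝ), f x * V (c'' + x)) ≤ Z + G 0 := by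
    calc (∫ x in Ioi (0:ℝ), f x * V (c'' + x))
        ≤ ∫ x in Ioi (0:ℝ), f x * (Z + G 0) := by
          refine setIntegral_mono_on (hI c'') (hfInt.mul_const _) measurableSet_Ioi ?_
          intro x hx
          exact mul_le_mul_of_nonneg_left (hVub _) (hfnn x)
      _ = Z + G 0 := by rw [integral_mul_const, hf1, one_mul]
  have hIlb : Z ≤ ∫ x in Ioi (0:ℝ), f x * V (cN + x) := by
    calc Z = ∫ x in Ioi (0:ℝ), f x * Z := by rw [integral_mul_const, hf1, one_mul]
      _ ≤ ∫ x in Ioi (0:ℝ), f x * V (cN + x) := by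
          refine setIntegral_mono_on (hfInt.mul_const _) (hI cN) measurableSet_Ioi ?_
          intro x hx
          have hx0 : (0:ℝ) < x := hx
          have hge : Z ≤ V (cN + x) := by
            rcases le_or_gt θ (cN + x) with h | h
            · exact (hVZ _ h).ge
            · exact (hVgt _ (by linarith) h).le
          exact mul_le_mul_of_nonneg_left hge (hfnn x)
  have hG : G c'' ≤ G cN :=
    hGinc.monotoneOn hc'' (self_mem_Iic) hc''
  rw [hJ c'', hJ cN]
  have h1 := mul_le_mul_of_nonneg_left hIub hγ.1.le
  have h2 := mul_le_mul_of_nonneg_left hIlb hγ.1.le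
  nlinarith [mul_lt_mul_of_pos_right hγ.2 hG0]
end

section
/- Set Z'' := (max_{s ≤ c_N} J(s)) − G(0), the maximum being attained. Then there exists a unique θ'' ∈ (c_N, θ_N) with J(θ'') = Z''. -/
open MeasureTheory Set Filter

theorem stmt_10
    (cN t₀ : ℝ) (G : ℝ → ℝ)
    (hcN : cN < 0) (ht₀ : 0 < t₀)
    (hGcont : ContinuousOn G (Iio t₀))
    (hGinc : StrictMonoOn G (Iic cN))
    (hGdec : StrictAntiOn G (Ico cN t₀))
    (hGtop : Tendsto G (nhdsWithin t₀ (Iio t₀)) atBot)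
    (hGbot : Tendsto G atBot atBot)
    (hG0 : 0 < G 0)
    (θN : ℝ) (hθN : θN ∈ Ioo cN t₀) (hGθN : G θN = G cN - G 0)
    (θN' : ℝ) (hθN' : θN' < cN) (hGθN' : G θN' = G cN - G 0)
    (f : ℝ → ℝ) (γ : ℝ)
    (hfm : Measurable f) (hf0 : ∀ x ≤ 0, f x = 0) (hfnn : ∀ x, 0 ≤ f x)
    (hf1 : (∫ x in Ioi (0:ℝ), f x) = 1) (hγ : γ ∈ Ioo (0:ℝ) 1)
    (hfpos : ∀ᵐ x ∂volume, 0 < x → 0 < f x)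
    (Z θ : ℝ) (hθ : θ ∈ Ioc cN θN)
    (V : ℝ → ℝ) (hVcont : Continuous V)
    (hVub : ∀ y, V y ≤ Z + G 0)
    (hVlb : ∀ r : ℝ, BddBelow (V '' Ici r))
    (hVanti : AntitoneOn V (Ici cN))
    (hVZ : ∀ y, θ ≤ y → V y = Z)
    (hVgt : ∀ y, cN ≤ y → y < θ → Z < V y)
    (c' : ℝ) (hc' : c' ∈ Ioc θN' cN) (hVc' : V c' = Z + G 0)
    (J : ℝ → ℝ) (hJ : ∀ s, J s = G s + γ * ∫ x in Ioi (0:ℝ), f x * V (s + x))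
    (c'' : ℝ) (hc'' : c'' ∈ Iic cN)
    (hmax : ∀ s ∈ Iic cN, J s ≤ J c'') :
    ∃! θ'' : ℝ, θ'' ∈ Ioo cN θN ∧ J θ'' = J c'' - G 0 := by
  obtain ⟨hγ0, hγ1⟩ := hγ
  obtain ⟨hcNθN, hθNt₀⟩ := hθN
  obtain ⟨hcNθ, hθθN⟩ := hθ
  -- f is integrable on Ioi 0
  have hfint : IntegrableOn f (Ioi (0:ℝ)) := by
    by_contra h
    rw [integral_undef h] at hf1
    norm_num at hf1
  -- per-s bounds on V (s + ·)
  have hVbd : ∀ s : ℝ, ∃ C : ℝ, 0 ≤ C ∧ ∀ x ∈ Ioi (0:ℝ), |V (s + x)| ≤ C := by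
    intro s
    obtain ⟨m, hm⟩ := hVlb s
    refine ⟨max |Z + G 0| |m|, le_trans (abs_nonneg _) (le_max_left _ _), fun x hx => ?_⟩
    rw [abs_le]
    constructor
    · have h1 : m ≤ V (s + x) := hm ⟨s + x, by simp [le_of_lt (mem_Ioi.1 hx)], rfl⟩
      have h2 : -max |Z + G 0| |m| ≤ -|m| := by
        simp [le_max_right]
      linarith [neg_abs_le m]
    · exact le_trans (hVub _) (le_trans (le_abs_self _) (le_max_left _ _))
  -- integrability of the integrand
  have hint : ∀ s : ℝ, IntegrableOn (fun x => f x * V (s + x)) (Ioi (0:ℝ)) := by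
    intro s
    obtain ⟨C, hC0, hC⟩ := hVbd s
    refine Integrable.mono' (hfint.const_mul C)
      ((hfm.mul ((hVcont.measurable).comp (measurable_const.add measurable_id))).aestronglyMeasurable) ?_
    filter_upwards [ae_restrict_mem measurableSet_Ioi] with x hx
    rw [Real.norm_eq_abs, abs_mul, abs_of_nonneg (hfnn x)]
    exact (mul_le_mul_of_nonneg_left (hC x hx) (hfnn x)).trans_eq (mul_comm _ _)
  -- monotonicity of the integral term
  have hImono : ∀ s₁ s₂ : ℝ, cN ≤ s₁ → s₁ ≤ s₂ →
      (∫ x in Ioi (0:ℝ), f x * V (s₂ + x)) ≤ ∫ x in Ioi (0:ℝ), f x * V (s₁ + x) := by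
    intro s₁ s₂ h1 h12
    refine setIntegral_mono_on (hint s₂) (hint s₁) measurableSet_Ioi (fun x hx => ?_)
    have hx0 : (0:ℝ) < x := mem_Ioi.1 hx
    have hV : V (s₂ + x) ≤ V (s₁ + x) :=
      hVanti (by simp only [mem_Ici]; linarith) (by simp only [mem_Ici]; linarith)
        (by linarith)
    exact mul_le_mul_of_nonneg_left hV (hfnn x)
  -- upper bound on the integral term
  have hIub : ∀ s : ℝ, (∫ x in Ioi (0:ℝ), f x * V (s + x)) ≤ Z + G 0 := by
    intro s
    have h1 : (∫ x in Ioi (0:ℝ), f x * V (s + x)) ≤ ∫ x in Ioi (0:ℝ), f x * (Z + G 0) :=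
      setIntegral_mono_on (hint s) (hfint.mul_const _) measurableSet_Ioi
        (fun x _ => mul_le_mul_of_nonneg_left (hVub _) (hfnn x))
    rwa [integral_mul_const, hf1, one_mul] at h1
  -- lower bound at cN
  have hIlb : Z ≤ ∫ x in Ioi (0:ℝ), f x * V (cN + x) := by
    have h1 : (∫ x in Ioi (0:ℝ), f x * Z) ≤ ∫ x in Ioi (0:ℝ), f x * V (cN + x) := by
      refine setIntegral_mono_on (hfint.mul_const _) (hint cN) measurableSet_Ioi
        (fun x hx => ?_)
      have hx0 : (0:ℝ) < x := mem_Ioi.1 hx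
      have : Z ≤ V (cN + x) := by
        rcases le_or_gt θ (cN + x) with h | h
        · exact (hVZ _ h).ge
        · exact (hVgt _ (by linarith) h).le
      exact mul_le_mul_of_nonneg_left this (hfnn x)
    rwa [integral_mul_const, hf1, one_mul] at h1
  -- strict comparison between cN and θN
  have hIstrict : (∫ x in Ioi (0:ℝ), f x * V (θN + x)) < ∫ x in Ioi (0:ℝ), f x * V (cN + x) := by
    set g : ℝ → ℝ := fun x => f x * (V (cN + x) - V (θN + x)) with hg
    have hgint : IntegrableOn g (Ioi (0:ℝ)) :=
      ((hint cN).sub (hint θN)).congr (ae_of_all _ (fun x => by simp [hg, mul_sub]))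
    have hgnn : ∀ x ∈ Ioi (0:ℝ), 0 ≤ g x := by
      intro x hx
      have hx0 : (0:ℝ) < x := mem_Ioi.1 hx
      have hV : V (θN + x) ≤ V (cN + x) :=
        hVanti (by simp only [mem_Ici]; linarith) (by simp only [mem_Ici]; linarith)
          (by linarith)
      simp only [hg]
      exact mul_nonneg (hfnn x) (by linarith)
    have hsub : Ioo (0:ℝ) (θ - cN) ⊆ Ioi (0:ℝ) := fun x hx => hx.1
    have hgint2 : IntegrableOn g (Ioo (0:ℝ) (θ - cN)) := hgint.mono_set hsub
    have hgnn2 : 0 ≤ᵐ[volume.restrict (Ioo (0:ℝ) (θ - cN))] g := by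
      filter_upwards [ae_restrict_mem measurableSet_Ioo] with x hx
      exact hgnn x (hsub hx)
    have hpos : 0 < ∫ x in Ioo (0:ℝ) (θ - cN), g x := by
      rw [setIntegral_pos_iff_support_of_nonneg_ae hgnn2 hgint2]
      have hae : (Ioo (0:ℝ) (θ - cN) : Set ℝ) ≤ᵐ[volume]
          ((Function.support g ∩ Ioo (0:ℝ) (θ - cN) : Set ℝ)) := by
        filter_upwards [hfpos] with x hfx hxmem
        refine ⟨?_, hxmem⟩
        have hx0 : (0:ℝ) < x := hxmem.1
        have hx1 : x < θ - cN := hxmem.2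
        have hVθ : V (θN + x) = Z := hVZ _ (by linarith)
        have hVc : Z < V (cN + x) := hVgt _ (by linarith) (by linarith)
        have hf' : 0 < f x := hfx hx0
        simp only [hg, Function.mem_support]
        rw [hVθ]
        nlinarith
      calc (0:ENNReal) < volume (Ioo (0:ℝ) (θ - cN)) := by
            rw [Real.volume_Ioo]; simp [ENNReal.ofReal_pos]; linarith
        _ ≤ volume (Function.support g ∩ Ioo (0:ℝ) (θ - cN)) := measure_mono_ae hae
    have hle : (∫ x in Ioo (0:ℝ) (θ - cN), g x) ≤ ∫ x in Ioi (0:ℝ), g x := by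
      refine setIntegral_mono_set hgint ?_ (HasSubset.Subset.eventuallyLE hsub)
      filter_upwards [ae_restrict_mem measurableSet_Ioi] with x hx
      exact hgnn x hx
    have hsplit : (∫ x in Ioi (0:ℝ), g x)
        = (∫ x in Ioi (0:ℝ), f x * V (cN + x)) - ∫ x in Ioi (0:ℝ), f x * V (θN + x) := by
      rw [← integral_sub (hint cN) (hint θN)]
      refine setIntegral_congr_fun measurableSet_Ioi (fun x _ => ?_)
      simp [hg, mul_sub]
    have : 0 < (∫ x in Ioi (0:ℝ), f x * V (cN + x)) - ∫ x in Ioi (0:ℝ), f x * V (θN + x) := by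
      rw [← hsplit]; linarith
    linarith
  -- key inequalities
  have hJcNmax : J cN ≤ J c'' := hmax cN (mem_Iic.2 le_rfl)
  have hA : J θN < J cN - G 0 := by
    rw [hJ θN, hJ cN, hGθN]
    have := mul_lt_mul_of_pos_left hIstrict hγ0
    linarith
  have hB : J c'' - G 0 < J cN := by
    rw [hJ c'', hJ cN]
    have h1 : G c'' ≤ G cN := hGinc.monotoneOn hc'' (mem_Iic.2 le_rfl) hc''
    have h2 : (∫ x in Ioi (0:ℝ), f x * V (c'' + x)) ≤ Z + G 0 := hIub c''
    have h3 : Z ≤ ∫ x in Ioi (0:ℝ), f x * V (cN + x) := hIlb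
    nlinarith
  have hT1 : J θN < J c'' - G 0 := by linarith
  -- continuity of J on Icc cN θN
  set W : ℝ → ℝ := fun y => V (max y cN) with hW
  have hWcont : Continuous W := hVcont.comp (continuous_id.max continuous_const)
  obtain ⟨m, hm⟩ := hVlb cN
  have hWbd : ∀ y : ℝ, |W y| ≤ max |Z + G 0| |m| := by
    intro y
    rw [abs_le]
    constructor
    · have h1 : m ≤ W y := hm ⟨max y cN, by simp [le_max_right], rfl⟩
      have h2 : -max |Z + G 0| |m| ≤ -|m| := by simp [le_max_right]
      linarith [neg_abs_le m]
    · exact le_trans (hVub _) (le_trans (le_abs_self _) (le_max_left _ _))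
  have hIcont : Continuous (fun s => ∫ x in Ioi (0:ℝ), f x * W (s + x)) := by
    refine continuous_of_dominated (bound := fun x => max |Z + G 0| |m| * f x)
      (fun s => ((hfm.mul (hWcont.measurable.comp (measurable_const.add measurable_id))).aestronglyMeasurable))
      (fun s => Eventually.of_forall fun x => ?_) (hfint.const_mul _)
      (Eventually.of_forall fun x => by
        exact continuous_const.mul (hWcont.comp (continuous_id.add continuous_const)))
    rw [Real.norm_eq_abs, abs_mul, abs_of_nonneg (hfnn x)]
    exact (mul_le_mul_of_nonneg_left (hWbd _) (hfnn x)).trans_eq (mul_comm _ _)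
  have hIeq : ∀ s : ℝ, cN ≤ s →
      (∫ x in Ioi (0:ℝ), f x * W (s + x)) = ∫ x in Ioi (0:ℝ), f x * V (s + x) := by
    intro s hs
    refine setIntegral_congr_fun measurableSet_Ioi (fun x hx => ?_)
    have hx0 : (0:ℝ) < x := mem_Ioi.1 hx
    have : max (s + x) cN = s + x := max_eq_left (by linarith)
    simp [hW, this]
  have hJcont : ContinuousOn J (Icc cN θN) := by
    have h1 : ContinuousOn (fun s => G s + γ * ∫ x in Ioi (0:ℝ), f x * W (s + x)) (Icc cN θN) :=
      (hGcont.mono (fun y hy => lt_of_le_of_lt hy.2 hθNt₀)).add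
        ((continuous_const.mul hIcont).continuousOn)
    refine ContinuousOn.congr h1 (fun s hs => ?_)
    rw [hJ s, hIeq s hs.1]
  -- strict antitonicity of J on Icc cN θN
  have hJanti : StrictAntiOn J (Icc cN θN) := by
    intro a ha b hb hab
    rw [hJ a, hJ b]
    have hG : G b < G a := hGdec ⟨ha.1, lt_of_le_of_lt ha.2 hθNt₀⟩
      ⟨hb.1, lt_of_le_of_lt hb.2 hθNt₀⟩ hab
    have hI := hImono a b ha.1 hab.le
    nlinarith
  -- IVT
  have hsub : Ioo (J θN) (J cN) ⊆ J '' Ioo cN θN :=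
    intermediate_value_Ioo' hcNθN.le hJcont
  obtain ⟨θ'', hθ''mem, hθ''eq⟩ := hsub ⟨hT1, hB⟩
  refine ⟨θ'', ⟨hθ''mem, hθ''eq⟩, ?_⟩
  rintro y ⟨hy, hyJ⟩
  exact hJanti.injOn (Ioo_subset_Icc_self hy) (Ioo_subset_Icc_self hθ''mem)
    (hyJ.trans hθ''eq.symm)
end

section
/- Define the Bellman update W(s) := sup_{a ∈ A(s)} Q_V(s, a). Then there exist θ'' ∈ (c_N, θ_N) and c'' ∈ (θ'_N, c_N] such that, setting Z'' := J(c'') − G(0): (i) for c_N ≤ s ≤ θ'' one has W(s) = J(s) = Q_V(s, s), i.e., the merging action a = s is optimal; (ii) for s > θ'' one has W(s) = Z'' = Q_V(s, c''), i.e., the non-merging action a = c'' is optimal. Moreover W is antitone on [c_N, ∞), W(y) = Z'' for y ≥ θ'', W(y) > Z'' for c_N ≤ y < θ'', W(y) ≤ Z'' + G(0) for all y ∈ ℝ, and W(c'') = Z'' + G(0). -/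
open MeasureTheory Set Filter

theorem stmt_11
    (cN t₀ : ℝ) (G : ℝ → ℝ)
    (hcN : cN < 0) (ht₀ : 0 < t₀)
    (hGcont : ContinuousOn G (Iio t₀))
    (hGinc : StrictMonoOn G (Iic cN))
    (hGdec : StrictAntiOn G (Ico cN t₀))
    (hGtop : Tendsto G (nhdsWithin t₀ (Iio t₀)) atBot)
    (hGbot : Tendsto G atBot atBot)
    (hG0 : 0 < G 0)
    (θN : ℝ) (hθN : θN ∈ Ioo cN t₀) (hGθN : G θN = G cN - G 0)
    (θN' : ℝ) (hθN' : θN' < cN) (hGθN' : G θN' = G cN - G 0)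
    (f : ℝ → ℝ) (γ : ℝ)
    (hfm : Measurable f) (hf0 : ∀ x ≤ 0, f x = 0) (hfnn : ∀ x, 0 ≤ f x)
    (hf1 : (∫ x in Ioi (0:ℝ), f x) = 1) (hγ : γ ∈ Ioo (0:ℝ) 1)
    (hfpos : ∀ᵐ x ∂volume, 0 < x → 0 < f x)
    (Z θ : ℝ) (hθ : θ ∈ Ioc cN θN)
    (V : ℝ → ℝ) (hVcont : Continuous V)
    (hVub : ∀ y, V y ≤ Z + G 0)
    (hVlb : ∀ r : ℝ, BddBelow (V '' Ici r))
    (hVanti : AntitoneOn V (Ici cN))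
    (hVZ : ∀ y, θ ≤ y → V y = Z)
    (hVgt : ∀ y, cN ≤ y → y < θ → Z < V y)
    (c' : ℝ) (hc' : c' ∈ Ioc θN' cN) (hVc' : V c' = Z + G 0)
    (J : ℝ → ℝ) (hJ : ∀ s, J s = G s + γ * ∫ x in Ioi (0:ℝ), f x * V (s + x))
    (W : ℝ → ℝ)
    (hW : ∀ s, W s = if s < t₀
      then max (J s)
        (sSup ((fun a => (G a - G 0) + γ * ∫ x in Ioi (0:ℝ), f x * V (a + x)) ''
          {a | a < s ∧ a < t₀}))
      else sSup ((fun a => (G a - G 0) + γ * ∫ x in Ioi (0:ℝ), f x * V (a + x)) '' Iio t₀)) :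
    ∃ θ'' ∈ Ioo cN θN, ∃ c'' ∈ Ioc θN' cN,
      (∀ s, cN ≤ s → s ≤ θ'' → W s = J s) ∧
      (∀ s, θ'' < s → W s = J c'' - G 0) ∧
      (∀ s, θ'' < s →
        W s = (G c'' - G 0) + γ * ∫ x in Ioi (0:ℝ), f x * V (c'' + x)) ∧
      AntitoneOn W (Ici cN) ∧
      (∀ y, θ'' ≤ y → W y = J c'' - G 0) ∧
      (∀ y, cN ≤ y → y < θ'' → J c'' - G 0 < W y) ∧
      (∀ y, W y ≤ (J c'' - G 0) + G 0) ∧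
      W c'' = (J c'' - G 0) + G 0 := by
  obtain ⟨hγ0, hγ1⟩ := hγ
  set Φ : ℝ → ℝ := fun a => (G a - G 0) + γ * ∫ x in Ioi (0:ℝ), f x * V (a + x) with hΦdef
  set I : ℝ → ℝ := fun s => ∫ x in Ioi (0:ℝ), f x * V (s + x) with hIdef
  -- basic integrability
  have hfint : IntegrableOn f (Ioi (0:ℝ)) volume := by
    by_contra h
    rw [MeasureTheory.integral_undef h] at hf1
    norm_num at hf1
  have hVmeas : ∀ s : ℝ, AEStronglyMeasurable (fun x => f x * V (s + x))
      (volume.restrict (Ioi (0:ℝ))) :=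
    fun s => (hfm.aestronglyMeasurable.mul
      ((hVcont.comp (continuous_const.add continuous_id)).aestronglyMeasurable)).restrict
  have hVbd : ∀ s : ℝ, ∃ M : ℝ, ∀ x ∈ Ioi (0:ℝ), |V (s + x)| ≤ M := by
    intro s
    obtain ⟨B, hB⟩ := hVlb s
    refine ⟨max |Z + G 0| |B|, fun x hx => abs_le.2 ⟨?_, ?_⟩⟩
    · have : B ≤ V (s + x) := hB ⟨s + x, by simp [le_add_of_nonneg_right (le_of_lt (mem_Ioi.mp hx))], rfl⟩
      calc -(max |Z + G 0| |B|) ≤ -|B| := by simp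
        _ ≤ B := neg_abs_le B
        _ ≤ V (s + x) := this
    · exact le_trans (hVub _) (le_trans (le_abs_self _) (le_max_left _ _))
  have hint : ∀ s : ℝ, IntegrableOn (fun x => f x * V (s + x)) (Ioi (0:ℝ)) volume := by
    intro s
    obtain ⟨M, hM⟩ := hVbd s
    refine Integrable.mono' (hfint.mul_const M) (hVmeas s) ?_
    rw [ae_restrict_iff' measurableSet_Ioi]
    refine Eventually.of_forall fun x hx => ?_
    rw [Real.norm_eq_abs, abs_mul, abs_of_nonneg (hfnn x)]
    exact mul_le_mul_of_nonneg_left (hM x hx) (hfnn x)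
  have hIub : ∀ s : ℝ, I s ≤ Z + G 0 := by
    intro s
    have h1 : I s ≤ ∫ x in Ioi (0:ℝ), f x * (Z + G 0) :=
      setIntegral_mono_on (hint s) (hfint.mul_const _) measurableSet_Ioi
        (fun x _ => mul_le_mul_of_nonneg_left (hVub _) (hfnn x))
    rwa [integral_mul_const, hf1, one_mul] at h1
  have hVgeZ : ∀ y, cN ≤ y → Z ≤ V y := by
    intro y hy
    rcases lt_or_ge y θ with h | h
    · exact le_of_lt (hVgt y hy h)
    · exact le_of_eq (hVZ y h).symm
  have hIlb : ∀ s, cN ≤ s → Z ≤ I s := by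
    intro s hs
    have h1 : (∫ x in Ioi (0:ℝ), f x * Z) ≤ I s :=
      setIntegral_mono_on (hfint.mul_const _) (hint s) measurableSet_Ioi
        (fun x hx => mul_le_mul_of_nonneg_left
          (hVgeZ _ (le_trans hs (le_add_of_nonneg_right (le_of_lt hx)))) (hfnn x))
    rwa [integral_mul_const, hf1, one_mul] at h1
  have hIZ : ∀ s, θ ≤ s → I s = Z := by
    intro s hs
    have h1 : I s = ∫ x in Ioi (0:ℝ), f x * Z := by
      refine setIntegral_congr_fun measurableSet_Ioi fun x hx => ?_
      rw [hVZ (s + x) (le_trans hs (le_add_of_nonneg_right (le_of_lt hx)))]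
    rw [h1, integral_mul_const, hf1, one_mul]
  have hIanti : AntitoneOn I (Ici cN) := by
    intro u hu v hv huv
    refine setIntegral_mono_on (hint v) (hint u) measurableSet_Ioi fun x hx => ?_
    refine mul_le_mul_of_nonneg_left ?_ (hfnn x)
    exact hVanti (mem_Ici.mpr (le_trans (mem_Ici.mp hu) (le_add_of_nonneg_right (le_of_lt (mem_Ioi.mp hx)))))
      (mem_Ici.mpr (le_trans (le_trans (mem_Ici.mp hu) huv) (le_add_of_nonneg_right (le_of_lt (mem_Ioi.mp hx)))))
      (by linarith)
  have hJI : ∀ s, J s = G s + γ * I s := hJ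
  have hΦJ : ∀ s, Φ s = J s - G 0 := by
    intro s; rw [hJI s, hΦdef]; ring
  have hJanti : StrictAntiOn J (Ico cN t₀) := by
    intro u hu v hv huv
    rw [hJI u, hJI v]
    have h1 : G v < G u := hGdec hu hv huv
    have h2 : γ * I v ≤ γ * I u :=
      mul_le_mul_of_nonneg_left (hIanti hu.1 (le_trans hu.1 (le_of_lt huv)) (le_of_lt huv))
        (le_of_lt hγ0)
    linarith
  -- strict inequality I cN > Z
  have hIcNgt : Z < I cN := by
    have hθcN := hθ.1
    set g : ℝ → ℝ := fun x => f x * V (cN + x) - f x * Z with hg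
    have hgnn : ∀ x, 0 ≤ g x := by
      intro x
      rcases le_or_gt x 0 with h | h
      · simp [hg, hf0 x h]
      · have : Z ≤ V (cN + x) := hVgeZ _ (le_add_of_nonneg_right (le_of_lt h))
        have := mul_le_mul_of_nonneg_left this (hfnn x)
        simp only [hg]; linarith
    have hgint : IntegrableOn g (Ioi (0:ℝ)) volume := (hint cN).sub (hfint.mul_const Z)
    have hpos : 0 < ∫ x in Ioi (0:ℝ), g x := by
      rw [setIntegral_pos_iff_support_of_nonneg_ae
        (Eventually.of_forall fun x => hgnn x) hgint]
      have hsub : ∀ᵐ x ∂volume, x ∈ Ioo (0:ℝ) (θ - cN) → x ∈ Function.support g ∩ Ioi 0 := by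
        filter_upwards [hfpos] with x hfx hx
        have hfx' : 0 < f x := hfx hx.1
        have hVx : Z < V (cN + x) := by
          refine hVgt _ (le_add_of_nonneg_right (le_of_lt hx.1)) ?_
          linarith [hx.2]
        refine ⟨?_, hx.1⟩
        simp only [Function.mem_support, hg]
        have : 0 < f x * V (cN + x) - f x * Z := by nlinarith
        intro hc; rw [hc] at this; exact lt_irrefl 0 this
      have hle : volume (Ioo (0:ℝ) (θ - cN)) ≤ volume (Function.support g ∩ Ioi 0) := by
        refine measure_mono_ae ?_
        filter_upwards [hsub] with x hx hmem using hx hmem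
      refine lt_of_lt_of_le ?_ hle
      rw [Real.volume_Ioo]
      simp only [ENNReal.ofReal_pos]
      linarith
    have hsplit : (∫ x in Ioi (0:ℝ), g x)
        = I cN - ∫ x in Ioi (0:ℝ), f x * Z := by
      simp only [hg]
      rw [integral_sub (hint cN) (hfint.mul_const Z)]
    rw [hsplit, integral_mul_const, hf1, one_mul] at hpos
    linarith
  -- continuity of I on [θN', ∞)
  have hIcont : ContinuousOn I (Ici θN') := by
    obtain ⟨B, hB⟩ := hVlb θN'
    set M : ℝ := max |Z + G 0| |B| with hM
    refine continuousOn_of_dominated (fun s _ => hVmeas s) ?_ (hfint.mul_const M) ?_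
    · intro s hs
      rw [ae_restrict_iff' measurableSet_Ioi]
      refine Eventually.of_forall fun x hx => ?_
      rw [Real.norm_eq_abs, abs_mul, abs_of_nonneg (hfnn x)]
      refine mul_le_mul_of_nonneg_left (abs_le.2 ⟨?_, ?_⟩) (hfnn x)
      · have hBle : B ≤ V (s + x) := hB ⟨s + x, by
          simp only [mem_Ici]
          have : (0:ℝ) < x := hx
          linarith [mem_Ici.mp hs], rfl⟩
        calc -M ≤ -|B| := by simp [hM]
          _ ≤ B := neg_abs_le B
          _ ≤ V (s + x) := hBle
      · exact le_trans (hVub _) (le_trans (le_abs_self _) (le_max_left _ _))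
    · refine Eventually.of_forall fun x => ?_
      exact (continuous_const.mul (hVcont.comp (continuous_id.add continuous_const))).continuousOn
  have hJcont : ContinuousOn J (Ici θN' ∩ Iio t₀) := by
    have : ContinuousOn (fun s => G s + γ * I s) (Ici θN' ∩ Iio t₀) :=
      (hGcont.mono inter_subset_right).add
        (continuousOn_const.mul (hIcont.mono inter_subset_left))
    exact this.congr fun s _ => hJI s
  -- maximize Φ on [θN', cN]
  have hcNt₀ : cN < t₀ := lt_trans hcN ht₀
  have hΦlt : ∀ a, a ≤ θN' → Φ a < Φ cN := by
    intro a ha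
    have hGa : G a ≤ G θN' := by
      rcases eq_or_lt_of_le ha with h | h
      · rw [h]
      · exact le_of_lt (hGinc (le_trans ha (le_of_lt hθN')) (le_of_lt hθN') h)
    have h1 : Φ a ≤ (G cN - G 0) - G 0 + γ * (Z + G 0) := by
      have := mul_le_mul_of_nonneg_left (hIub a) (le_of_lt hγ0)
      simp only [hΦdef]
      have : G a - G 0 + γ * I a ≤ G θN' - G 0 + γ * (Z + G 0) := by
        have h2 : γ * I a ≤ γ * (Z + G 0) := mul_le_mul_of_nonneg_left (hIub a) (le_of_lt hγ0)
        linarith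
      rw [hGθN'] at this
      linarith
    have h2 : (G cN - G 0) + γ * Z ≤ Φ cN := by
      have := mul_le_mul_of_nonneg_left (hIlb cN le_rfl) (le_of_lt hγ0)
      simp only [hΦdef]
      linarith
    have h3 : γ * G 0 < G 0 := by nlinarith
    linarith
  obtain ⟨c'', hc''mem, hc''max⟩ :=
    isCompact_Icc.exists_isMaxOn (nonempty_Icc.mpr (le_of_lt hθN'))
      ((hΦdef ▸ ((hGcont.mono (fun x hx => lt_trans (lt_of_le_of_lt hx.2 hcN) ht₀ : Icc θN' cN ⊆ Iio t₀)).sub continuousOn_const).add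
        (continuousOn_const.mul (hIcont.mono (fun x hx => hx.1 : Icc θN' cN ⊆ Ici θN')))) :
        ContinuousOn Φ (Icc θN' cN))
  have hc''max' : ∀ a ∈ Icc θN' cN, Φ a ≤ Φ c'' := hc''max
  have hcNle : Φ cN ≤ Φ c'' := hc''max' cN ⟨le_of_lt hθN', le_rfl⟩
  have hc''gt : θN' < c'' := by
    rcases eq_or_lt_of_le hc''mem.1 with h | h
    · exfalso
      have := hΦlt θN' le_rfl
      rw [h] at this
      linarith
    · exact h
  have hglobal : ∀ a, a < t₀ → Φ a ≤ Φ c'' := by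
    intro a hat
    rcases le_or_gt a θN' with h | h
    · exact le_trans (le_of_lt (hΦlt a h)) hcNle
    rcases le_or_gt a cN with h2 | h2
    · exact hc''max' a ⟨le_of_lt h, h2⟩
    · have : J a < J cN := hJanti ⟨le_rfl, hcNt₀⟩ ⟨le_of_lt h2, hat⟩ h2
      rw [hΦJ a, hΦJ cN] at *
      linarith
  set Z'' : ℝ := Φ c'' with hZ''
  -- bounds for IVT
  have hGc''le : G c'' ≤ G cN := by
    rcases eq_or_lt_of_le hc''mem.2 with h | h
    · rw [h]
    · exact le_of_lt (hGinc (le_of_lt h) Set.self_mem_Iic h)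
  have hJcNgt : Z'' < J cN := by
    have h1 : Z'' ≤ (G cN - G 0) + γ * (Z + G 0) := by
      have h2 : γ * I c'' ≤ γ * (Z + G 0) := mul_le_mul_of_nonneg_left (hIub c'') (le_of_lt hγ0)
      simp only [hZ'', hΦdef]
      linarith
    have h2 : G cN + γ * Z ≤ J cN := by
      have := mul_le_mul_of_nonneg_left (hIlb cN le_rfl) (le_of_lt hγ0)
      rw [hJI cN]; linarith
    have h3 : γ * G 0 < G 0 := by nlinarith
    linarith
  have hJθNlt : J θN < Z'' := by
    have h1 : J θN = G cN - G 0 + γ * Z := by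
      rw [hJI θN, hIZ θN hθ.2, hGθN]
    have h2 : (G cN - G 0) + γ * I cN ≤ Z'' := le_trans (le_of_eq rfl) hcNle
    have h3 : γ * Z < γ * I cN := mul_lt_mul_of_pos_left hIcNgt hγ0
    linarith
  -- IVT to get θ''
  have hsubJ : Icc cN θN ⊆ Ici θN' ∩ Iio t₀ := by
    intro x hx
    exact ⟨le_trans (le_of_lt hθN') hx.1, lt_of_le_of_lt hx.2 hθN.2⟩
  obtain ⟨θ'', hθ''mem, hJθ''⟩ :=
    intermediate_value_Ioo' (le_of_lt hθN.1) (hJcont.mono hsubJ) ⟨hJθNlt, hJcNgt⟩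
  have hθ''t₀ : θ'' < t₀ := lt_trans hθ''mem.2 hθN.2
  have hc''cN : c'' ≤ cN := hc''mem.2
  have hc''t₀ : c'' < t₀ := lt_of_le_of_lt hc''cN hcNt₀
  have hc''θ'' : c'' < θ'' := lt_of_le_of_lt hc''cN hθ''mem.1
  -- J comparisons with Z''
  have hJgtZ : ∀ s, cN ≤ s → s < θ'' → Z'' < J s := by
    intro s hs hsθ
    have := hJanti ⟨hs, lt_trans hsθ hθ''t₀⟩ ⟨le_of_lt hθ''mem.1, hθ''t₀⟩ hsθ
    rw [hJθ''] at this; exact this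
  have hJgeZ : ∀ s, cN ≤ s → s ≤ θ'' → Z'' ≤ J s := by
    intro s hs hsθ
    rcases eq_or_lt_of_le hsθ with h | h
    · rw [h, hJθ'']
    · exact le_of_lt (hJgtZ s hs h)
  have hJltZ : ∀ s, θ'' < s → s < t₀ → J s < Z'' := by
    intro s hsθ hst
    have := hJanti ⟨le_of_lt hθ''mem.1, hθ''t₀⟩ ⟨le_of_lt (lt_trans hθ''mem.1 hsθ), hst⟩ hsθ
    rw [hJθ''] at this; exact this
  -- sSup facts
  have hSne : ∀ s : ℝ, (Φ '' {a | a < s ∧ a < t₀}).Nonempty := by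
    intro s
    exact ⟨Φ (min s t₀ - 1), ⟨min s t₀ - 1,
      ⟨by nlinarith [min_le_left s t₀], by nlinarith [min_le_right s t₀]⟩, rfl⟩⟩
  have hSub : ∀ s : ℝ, ∀ b ∈ Φ '' {a | a < s ∧ a < t₀}, b ≤ Z'' := by
    rintro s b ⟨a, ⟨_, hat⟩, rfl⟩
    exact hglobal a hat
  have hsSup_le : ∀ s : ℝ, sSup (Φ '' {a | a < s ∧ a < t₀}) ≤ Z'' :=
    fun s => csSup_le (hSne s) (hSub s)
  have hsSup_eq : ∀ s : ℝ, c'' < s → sSup (Φ '' {a | a < s ∧ a < t₀}) = Z'' := by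
    intro s hs
    refine le_antisymm (hsSup_le s) ?_
    exact le_csSup ⟨Z'', hSub s⟩ ⟨c'', ⟨hs, hc''t₀⟩, rfl⟩
  have hsSup_t₀ : sSup (Φ '' Iio t₀) = Z'' := by
    refine le_antisymm ?_ ?_
    · refine csSup_le ⟨Φ c'', ⟨c'', hc''t₀, rfl⟩⟩ ?_
      rintro b ⟨a, hat, rfl⟩
      exact hglobal a hat
    · refine le_csSup ⟨Z'', ?_⟩ ⟨c'', hc''t₀, rfl⟩
      rintro b ⟨a, hat, rfl⟩
      exact hglobal a hat
  -- W values
  have hWJ : ∀ s, cN ≤ s → s ≤ θ'' → W s = J s := by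
    intro s hs hsθ
    have hst : s < t₀ := lt_of_le_of_lt hsθ hθ''t₀
    rw [hW s, if_pos hst]
    exact max_eq_left (le_trans (hsSup_le s) (hJgeZ s hs hsθ))
  have hWZ : ∀ s, θ'' < s → W s = Z'' := by
    intro s hsθ
    rcases lt_or_ge s t₀ with hst | hst
    · rw [hW s, if_pos hst, hsSup_eq s (lt_trans hc''θ'' hsθ)]
      exact max_eq_right (le_of_lt (hJltZ s hsθ hst))
    · rw [hW s, if_neg (not_lt.mpr hst)]
      exact hsSup_t₀
  have hZJ : Z'' = J c'' - G 0 := hΦJ c''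
  refine ⟨θ'', hθ''mem, c'', ⟨hc''gt, hc''cN⟩, hWJ, ?_, ?_, ?_, ?_, ?_, ?_, ?_⟩
  · intro s hs; rw [hWZ s hs, hZJ]
  · intro s hs; rw [hWZ s hs]
  · -- antitone
    intro u hu v hv huv
    rcases le_or_gt v θ'' with hvθ | hvθ
    · rw [hWJ u hu (le_trans huv hvθ), hWJ v hv hvθ]
      exact hJanti.antitoneOn ⟨hu, lt_of_le_of_lt (le_trans huv hvθ) hθ''t₀⟩
        ⟨hv, lt_of_le_of_lt hvθ hθ''t₀⟩ huv
    · rcases le_or_gt u θ'' with huθ | huθ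
      · rw [hWJ u hu huθ, hWZ v hvθ]
        exact hJgeZ u hu huθ
      · rw [hWZ u huθ, hWZ v hvθ]
  · intro y hy
    rcases eq_or_lt_of_le hy with h | h
    · rw [← h, hWJ θ'' (le_of_lt hθ''mem.1) le_rfl, hJθ'', hZJ]
    · rw [hWZ y h, hZJ]
  · intro y hy hyθ
    rw [hWJ y hy (le_of_lt hyθ), ← hZJ]
    exact hJgtZ y hy hyθ
  · intro y
    rw [← hZJ]
    rcases lt_or_ge y t₀ with hyt | hyt
    · rw [hW y, if_pos hyt]
      refine max_le ?_ (le_trans (hsSup_le y) (by linarith))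
      have := hglobal y hyt
      rw [hΦJ y] at this
      linarith
    · rw [hW y, if_neg (not_lt.mpr hyt), hsSup_t₀]
      linarith
  · rw [← hZJ]
    have hWc'' : W c'' = max (J c'') (sSup (Φ '' {a | a < c'' ∧ a < t₀})) := by
      rw [hW c'', if_pos hc''t₀]
    rw [hWc'']
    have hJc'' : J c'' = Z'' + G 0 := by rw [hZJ]; ring
    rw [hJc'']
    exact max_eq_left (le_trans (hsSup_le c'') (by linarith))
end

section
/- Fix N ≥ 1 and define the finite-horizon value functions by backward recursion: V^(N)(s) := max( G(s), sup_{a < s, a < t₀} H(a) ) for s < t₀ and V^(N)(s) := sup_{a < t₀} H(a) for s ≥ t₀, and for k = N−1, ..., 1, V^(k)(s) := sup_{a ∈ A(s)} Q_{V^(k+1)}(s, a). Then for every k ∈ {1, ..., N} the optimal stage-k policy is threshold-based on s ≥ c_N: there exist a threshold θ_k ∈ (c_N, θ_N] and a constant time reduction c_k ∈ (θ'_N, c_N] such that for c_N ≤ s ≤ θ_k the merging action a = s attains the supremum defining V^(k)(s), while for s > θ_k the non-merging action a = c_k attains it (for k = N one may take θ_N and c_N themselves). -/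
open MeasureTheory Set Filter

lemma master_step
    (cN t₀ : ℝ) (G : ℝ → ℝ) (hcN : cN < 0) (ht₀ : 0 < t₀)
    (hGcont : ContinuousOn G (Iio t₀))
    (hGinc : StrictMonoOn G (Iic cN))
    (hGdec : StrictAntiOn G (Ico cN t₀))
    (hGtop : Tendsto G (nhdsWithin t₀ (Iio t₀)) atBot)
    (hGbot : Tendsto G atBot atBot)
    (hG0 : 0 < G 0)
    (θN : ℝ) (hθN : θN ∈ Ioo cN t₀) (hGθN : G θN = G cN - G 0)
    (θN' : ℝ) (hθN' : θN' < cN) (hGθN' : G θN' = G cN - G 0)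
    (E : ℝ → ℝ) (ε : ℝ) (hε0 : 0 ≤ ε) (hεG : ε < G 0)
    (hEcont : Continuous E) (hEanti : AntitoneOn E (Ici cN))
    (hEbd : ∀ a, E a ≤ E cN + ε)
    (V : ℝ → ℝ)
    (hV : ∀ s, V s = if s < t₀
      then max (G s + E s) (sSup ((fun a => G a - G 0 + E a) '' {a | a < s ∧ a < t₀}))
      else sSup ((fun a => G a - G 0 + E a) '' Iio t₀)) :
    ∃ θ ∈ Ioc cN θN, ∃ c ∈ Ioc θN' cN,
      (∀ s ∈ Icc cN θ, V s = G s + E s) ∧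
      (∀ s, θ < s → V s = G c - G 0 + E c) ∧
      Measurable V ∧
      {s | ¬ContinuousAt V s}.Countable ∧
      AntitoneOn V (Ici cN) ∧
      (∀ s, V s ≤ (G c - G 0 + E c) + G 0) ∧
      (∀ r, BddBelow (V '' Ici r)) := by
  have hcNt₀ : cN < t₀ := lt_trans hcN ht₀
  have hGle : ∀ a, a < t₀ → G a ≤ G cN := by
    intro a ha
    rcases le_or_gt a cN with h | h
    · exact hGinc.monotoneOn (mem_Iic.2 h) (mem_Iic.2 le_rfl) h
    · exact (hGdec ⟨le_rfl, hcNt₀⟩ ⟨h.le, ha⟩ h).le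
  -- strict/weak antitonicity of M := G + E on [cN, t₀)
  have hMle : ∀ u v, cN ≤ u → u ≤ v → v < t₀ → G v + E v ≤ G u + E u := by
    intro u v h1 h2 h3
    rcases eq_or_lt_of_le h2 with rfl | h2'
    · exact le_rfl
    · have hg := hGdec ⟨h1, lt_of_le_of_lt h2 h3⟩ ⟨h1.trans h2, h3⟩ h2'
      have hE := hEanti (mem_Ici.2 h1) (mem_Ici.2 (h1.trans h2)) h2
      linarith
  have hMlt : ∀ u v, cN ≤ u → u < v → v < t₀ → G v + E v < G u + E u := by
    intro u v h1 h2 h3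
    have hg := hGdec ⟨h1, lt_of_le_of_lt h2.le h3⟩ ⟨h1.trans h2.le, h3⟩ h2
    have hE := hEanti (mem_Ici.2 h1) (mem_Ici.2 (h1.trans h2.le)) h2.le
    linarith
  -- tail bound: G a < T implies φ a < φ cN
  set T : ℝ := (G cN - G 0 + E cN) + G 0 - E cN - ε with hT_def
  have hT : ∀ a, G a < T → G a - G 0 + E a < G cN - G 0 + E cN := by
    intro a ha
    have := hEbd a
    linarith
  obtain ⟨R, hR⟩ : ∃ R, ∀ a ≤ R, G a < T := eventually_atBot.1 (hGbot.eventually (eventually_lt_atBot T))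
  have htop : {a | G a < T} ∈ nhdsWithin t₀ (Iio t₀) := hGtop.eventually (eventually_lt_atBot T)
  obtain ⟨u, hu, huS⟩ := mem_nhdsLT_iff_exists_Ioo_subset.1 htop
  set lo : ℝ := min R (θN' - 1) with hlo_def
  have hlo_lt : lo < cN := lt_of_le_of_lt (min_le_right _ _) (by linarith)
  set hi : ℝ := max u cN with hhi_def
  have hhi : hi < t₀ := max_lt hu hcNt₀
  have hlohi : lo ≤ hi := le_trans hlo_lt.le (le_max_right _ _)
  have hIcc_sub : Icc lo hi ⊆ Iio t₀ := fun x hx => lt_of_le_of_lt hx.2 hhi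
  have hφcont : ContinuousOn (fun a => G a - G 0 + E a) (Iio t₀) :=
    (hGcont.sub continuousOn_const).add hEcont.continuousOn
  obtain ⟨c, hcmem, hcmax⟩ := isCompact_Icc.exists_isMaxOn (nonempty_Icc.2 hlohi)
    (hφcont.mono hIcc_sub)
  have hcNmem : cN ∈ Icc lo hi := ⟨hlo_lt.le, le_max_right _ _⟩
  have hφcNc : G cN - G 0 + E cN ≤ G c - G 0 + E c := hcmax hcNmem
  have hct₀ : c < t₀ := hIcc_sub hcmem
  have hglobal : ∀ a, a < t₀ → G a - G 0 + E a ≤ G c - G 0 + E c := by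
    intro a ha
    rcases lt_or_ge a lo with h | h
    · exact le_trans (hT a (hR a (le_trans h.le (min_le_left _ _)))).le hφcNc
    · rcases le_or_gt a hi with h2 | h2
      · exact hcmax ⟨h, h2⟩
      · have hG : G a < T := huS ⟨lt_of_le_of_lt (le_max_left u cN) h2, ha⟩
        exact (hT a hG).le.trans hφcNc
  have hccN : c ≤ cN := by
    by_contra h
    push_neg at h
    have := hMlt cN c le_rfl h hct₀
    linarith
  have hcθN' : θN' < c := by
    by_contra h
    push_neg at h
    have h1 : G c ≤ G θN' := hGinc.monotoneOn (mem_Iic.2 (h.trans hθN'.le)) (mem_Iic.2 hθN'.le) h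
    rw [hGθN'] at h1
    have := hEbd c
    linarith
  -- IVT to get θ
  have hMcNK : G c - G 0 + E c < G cN + E cN := by
    have h1 : G c ≤ G cN := hGinc.monotoneOn (mem_Iic.2 hccN) (mem_Iic.2 le_rfl) hccN
    have := hEbd c
    linarith
  have hMθNK : G θN + E θN ≤ G c - G 0 + E c := by
    have hE : E θN ≤ E cN := hEanti (mem_Ici.2 le_rfl) (mem_Ici.2 hθN.1.le) hθN.1.le
    rw [hGθN]
    linarith
  have hsub2 : Icc cN θN ⊆ Iio t₀ := fun x hx => lt_of_le_of_lt hx.2 hθN.2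
  obtain ⟨θ, hθmem, hMθ⟩ := intermediate_value_Icc' hθN.1.le
    ((hGcont.mono hsub2).add (hEcont.continuousOn.mono hsub2))
    ⟨hMθNK, hMcNK.le⟩
  have hMθ' : G θ + E θ = G c - G 0 + E c := hMθ
  have hθcN : cN < θ := by
    rcases eq_or_lt_of_le hθmem.1 with h | h
    · exfalso; rw [← h] at hMθ'; linarith
    · exact h
  have hθt₀ : θ < t₀ := lt_of_le_of_lt hθmem.2 hθN.2
  -- sSup facts
  have hbdd : ∀ s : Set ℝ, s ⊆ Iio t₀ →
      ∀ y ∈ (fun a => G a - G 0 + E a) '' s, y ≤ G c - G 0 + E c := by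
    rintro s hs y ⟨a, ha, rfl⟩
    exact hglobal a (hs ha)
  have hsupt₀ : sSup ((fun a => G a - G 0 + E a) '' Iio t₀) = G c - G 0 + E c := by
    apply IsGreatest.csSup_eq
    exact ⟨⟨c, hct₀, rfl⟩, fun y hy => hbdd _ (fun x hx => hx) y hy⟩
  have hsub3 : ∀ s : ℝ, {a | a < s ∧ a < t₀} ⊆ Iio t₀ := fun s a ha => ha.2
  have hne : ∀ s : ℝ, ((fun a => G a - G 0 + E a) '' {a | a < s ∧ a < t₀}).Nonempty := by
    intro s
    refine ⟨_, ⟨min s t₀ - 1, ⟨?_, ?_⟩, rfl⟩⟩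
    · exact lt_of_lt_of_le (sub_one_lt _) (min_le_left _ _)
    · exact lt_of_lt_of_le (sub_one_lt _) (min_le_right _ _)
  have hsup_le : ∀ s : ℝ, sSup ((fun a => G a - G 0 + E a) '' {a | a < s ∧ a < t₀})
      ≤ G c - G 0 + E c := fun s => csSup_le (hne s) (hbdd _ (hsub3 s))
  have hsup_eq : ∀ s, θ < s →
      sSup ((fun a => G a - G 0 + E a) '' {a | a < s ∧ a < t₀}) = G c - G 0 + E c := by
    intro s hs
    apply IsGreatest.csSup_eq
    exact ⟨⟨c, ⟨lt_of_le_of_lt hccN (lt_trans hθcN hs), hct₀⟩, rfl⟩, hbdd _ (hsub3 s)⟩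
  -- value formulas
  have hVlow : ∀ s ∈ Icc cN θ, V s = G s + E s := by
    intro s hs
    have hst : s < t₀ := lt_of_le_of_lt hs.2 hθt₀
    rw [hV s, if_pos hst]
    apply max_eq_left
    refine le_trans (hsup_le s) ?_
    rw [← hMθ']
    exact hMle s θ hs.1 hs.2 hθt₀
  have hVhigh : ∀ s, θ < s → V s = G c - G 0 + E c := by
    intro s hs
    rcases lt_or_ge s t₀ with h | h
    · rw [hV s, if_pos h, hsup_eq s hs]
      apply max_eq_right
      have := hMlt θ s hθcN.le hs h
      linarith
    · rw [hV s, if_neg (not_lt.2 h)]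
      exact hsupt₀
  have hVgeK : ∀ s, cN ≤ s → G c - G 0 + E c ≤ V s := by
    intro s hs
    rcases le_or_gt s θ with h | h
    · rw [hVlow s ⟨hs, h⟩]
      have := hMle s θ hs h hθt₀
      linarith [hMθ']
    · rw [hVhigh s h]
  have hVanti : AntitoneOn V (Ici cN) := by
    intro x hx y hy hxy
    rcases le_or_gt y θ with h | h
    · rw [hVlow x ⟨hx, hxy.trans h⟩, hVlow y ⟨hy, h⟩]
      exact hMle x y hx hxy (lt_of_le_of_lt h hθt₀)
    · rw [hVhigh y h]
      exact hVgeK x hx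
  have hVub : ∀ s, V s ≤ (G c - G 0 + E c) + G 0 := by
    intro s
    rcases lt_or_ge s t₀ with h | h
    · rw [hV s, if_pos h]
      apply max_le
      · have := hglobal s h; linarith
      · linarith [hsup_le s]
    · rw [hV s, if_neg (not_lt.2 h), hsupt₀]; linarith
  have hVlb : ∀ r, BddBelow (V '' Ici r) := by
    intro r
    rcases le_or_gt cN r with h | h
    · refine ⟨G c - G 0 + E c, ?_⟩
      rintro y ⟨s, hs, rfl⟩
      exact hVgeK s (le_trans h hs)
    · have hsubr : Icc r cN ⊆ Iio t₀ := fun x hx => lt_of_le_of_lt hx.2 hcNt₀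
      obtain ⟨x₁, hx₁mem, hx₁⟩ := isCompact_Icc.exists_isMinOn (nonempty_Icc.2 h.le)
        (hGcont.mono hsubr)
      obtain ⟨x₂, hx₂mem, hx₂⟩ := isCompact_Icc.exists_isMinOn (nonempty_Icc.2 h.le)
        (hEcont.continuousOn (s := Icc r cN))
      refine ⟨min (G c - G 0 + E c) (G x₁ + E x₂), ?_⟩
      rintro y ⟨s, hs, rfl⟩
      rcases le_or_gt cN s with h2 | h2
      · exact le_trans (min_le_left _ _) (hVgeK s h2)
      · have hst : s < t₀ := h2.trans hcNt₀
        have hmem : s ∈ Icc r cN := ⟨hs, h2.le⟩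
        have hGs : G x₁ ≤ G s := hx₁ hmem
        have hEs : E x₂ ≤ E s := hx₂ hmem
        have : G x₁ + E x₂ ≤ V s := by
          rw [hV s, if_pos hst]
          exact le_trans (add_le_add hGs hEs) (le_max_left _ _)
        exact le_trans (min_le_right _ _) this
  -- monotone sup function
  have hgmono : Monotone (fun s => sSup ((fun a => G a - G 0 + E a) '' {a | a < s ∧ a < t₀})) := by
    intro s1 s2 h12
    apply csSup_le_csSup
    · exact ⟨G c - G 0 + E c, fun y hy => hbdd _ (hsub3 s2) y hy⟩
    · exact hne s1
    · exact image_mono (fun a ha => ⟨lt_of_lt_of_le ha.1 h12, ha.2⟩)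
  -- measurability
  have hG₀ : Measurable (fun s => if s < t₀ then G s else 0) := by
    apply measurable_of_continuousOn_compl_singleton t₀
    intro x hx
    have hx' : x ≠ t₀ := hx
    rcases lt_or_gt_of_ne hx' with h | h
    · have hev : (fun s => if s < t₀ then G s else 0) =ᶠ[nhds x] G := by
        filter_upwards [Iio_mem_nhds h] with y hy
        rw [if_pos (mem_Iio.1 hy)]
      exact ((hGcont.continuousAt (Iio_mem_nhds h)).congr hev.symm).continuousWithinAt
    · have hev : (fun s => if s < t₀ then G s else 0) =ᶠ[nhds x] (fun _ => (0:ℝ)) := by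
        filter_upwards [Ioi_mem_nhds h] with y hy
        rw [if_neg (not_lt.2 (le_of_lt (mem_Ioi.1 hy)))]
      exact (continuousAt_const.congr hev.symm).continuousWithinAt
  have hVmeas : Measurable V := by
    have h1 : Measurable (fun s => if s < t₀ then
        max ((if s < t₀ then G s else 0) + E s)
          (sSup ((fun a => G a - G 0 + E a) '' {a | a < s ∧ a < t₀}))
        else G c - G 0 + E c) := by
      apply Measurable.ite measurableSet_Iio
      · exact (hG₀.add hEcont.measurable).max hgmono.measurable
      · exact measurable_const
    have heq : V = fun s => if s < t₀ then
        max ((if s < t₀ then G s else 0) + E s)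
          (sSup ((fun a => G a - G 0 + E a) '' {a | a < s ∧ a < t₀}))
        else G c - G 0 + E c := by
      funext s
      by_cases h : s < t₀
      · rw [hV s, if_pos h, if_pos h, if_pos h]
      · rw [hV s, if_neg h, if_neg h, hsupt₀]
    rw [heq]
    exact h1
  -- countable discontinuities
  have hVcnt : {s | ¬ContinuousAt V s}.Countable := by
    apply hgmono.countable_not_continuousAt.mono
    intro s hs
    simp only [mem_setOf_eq] at hs ⊢
    intro hg
    apply hs
    rcases lt_or_ge s t₀ with h | h
    · have hev : (fun u => max (G u + E u)
          (sSup ((fun a => G a - G 0 + E a) '' {a | a < u ∧ a < t₀}))) =ᶠ[nhds s] V := by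
        filter_upwards [Iio_mem_nhds h] with u hu
        rw [hV u, if_pos (mem_Iio.1 hu)]
      have hc : ContinuousAt (fun u => max (G u + E u)
          (sSup ((fun a => G a - G 0 + E a) '' {a | a < u ∧ a < t₀}))) s :=
        ((hGcont.continuousAt (Iio_mem_nhds h)).add hEcont.continuousAt).max hg
      exact hc.congr hev
    · have hev : (fun _ => G c - G 0 + E c) =ᶠ[nhds s] V := by
        filter_upwards [Ioi_mem_nhds (lt_of_lt_of_le hθt₀ h)] with u hu
        rw [hVhigh u (mem_Ioi.1 hu)]
      exact continuousAt_const.congr hev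
  exact ⟨θ, ⟨hθcN, hθmem.2⟩, c, ⟨hcθN', hccN⟩, hVlow, hVhigh, hVmeas, hVcnt, hVanti, hVub, hVlb⟩


lemma cont_step
    (cN : ℝ) (f : ℝ → ℝ) (hfm : Measurable f) (hf0 : ∀ x ≤ 0, f x = 0)
    (hfnn : ∀ x, 0 ≤ f x)
    (hfint : Integrable f (volume.restrict (Ioi (0:ℝ))))
    (hf1 : (∫ x in Ioi (0:ℝ), f x) = 1)
    (U : ℝ → ℝ) (K' B : ℝ)
    (hUmeas : Measurable U)
    (hUcnt : {s | ¬ContinuousAt U s}.Countable)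
    (hUanti : AntitoneOn U (Ici cN))
    (hUge : ∀ t, cN ≤ t → K' ≤ U t)
    (hUub : ∀ s, U s ≤ B)
    (hUlb : ∀ r, BddBelow (U '' Ici r)) :
    (∀ s, Integrable (fun x => f x * U (s + x)) (volume.restrict (Ioi (0:ℝ)))) ∧
    Continuous (fun s => ∫ x in Ioi (0:ℝ), f x * U (s + x)) ∧
    AntitoneOn (fun s => ∫ x in Ioi (0:ℝ), f x * U (s + x)) (Ici cN) ∧
    (∀ s, (∫ x in Ioi (0:ℝ), f x * U (s + x)) ≤ B) ∧
    (∀ s, cN ≤ s → K' ≤ ∫ x in Ioi (0:ℝ), f x * U (s + x)) := by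
  have hmeas : ∀ s : ℝ, AEStronglyMeasurable (fun x => f x * U (s + x))
      (volume.restrict (Ioi (0:ℝ))) := by
    intro s
    exact (hfm.mul (hUmeas.comp (measurable_id'.const_add s))).aestronglyMeasurable
  -- two-sided bound on U on [r, ∞)
  have hbd : ∀ r : ℝ, ∃ C : ℝ, ∀ t, r ≤ t → |U t| ≤ C := by
    intro r
    obtain ⟨L, hL⟩ := hUlb r
    refine ⟨max B (-L), fun t ht => abs_le.2 ⟨?_, le_trans (hUub t) (le_max_left _ _)⟩⟩
    have h1 : L ≤ U t := hL ⟨t, ht, rfl⟩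
    have h2 : -(max B (-L)) ≤ L := by
      have := le_max_right B (-L)
      linarith
    linarith
  have hint : ∀ s, Integrable (fun x => f x * U (s + x)) (volume.restrict (Ioi (0:ℝ))) := by
    intro s
    obtain ⟨C, hC⟩ := hbd s
    apply Integrable.mono' (hfint.const_mul C) (hmeas s)
    filter_upwards [ae_restrict_mem measurableSet_Ioi] with x hx
    have hx' : (0:ℝ) < x := hx
    rw [norm_mul, Real.norm_eq_abs, Real.norm_eq_abs, abs_of_nonneg (hfnn x)]
    calc f x * |U (s + x)| ≤ f x * C := by
          apply mul_le_mul_of_nonneg_left (hC (s + x) (by linarith)) (hfnn x)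
      _ = C * f x := mul_comm _ _
  have hcont : Continuous (fun s => ∫ x in Ioi (0:ℝ), f x * U (s + x)) := by
    rw [continuous_iff_continuousAt]
    intro s₀
    obtain ⟨C, hC⟩ := hbd (s₀ - 1)
    apply continuousAt_of_dominated (bound := fun x => C * f x)
    · exact Eventually.of_forall hmeas
    · filter_upwards [Ioo_mem_nhds (show s₀ - 1 < s₀ by linarith) (show s₀ < s₀ + 1 by linarith)]
        with s hs
      filter_upwards [ae_restrict_mem measurableSet_Ioi] with x hx
      have hx' : (0:ℝ) < x := hx
      rw [norm_mul, Real.norm_eq_abs, Real.norm_eq_abs, abs_of_nonneg (hfnn x)]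
      calc f x * |U (s + x)| ≤ f x * C := by
            apply mul_le_mul_of_nonneg_left (hC (s + x) (by linarith [hs.1])) (hfnn x)
        _ = C * f x := mul_comm _ _
    · exact hfint.const_mul C
    · -- a.e. continuity
      have hnull : volume ((fun x : ℝ => s₀ + x) ⁻¹' {s | ¬ContinuousAt U s}) = 0 :=
        Set.Countable.measure_zero (hUcnt.preimage (add_right_injective s₀)) _
      have hae : ∀ᵐ x ∂(volume : Measure ℝ),
          ContinuousAt (fun s => f x * U (s + x)) s₀ := by
        rw [ae_iff]
        apply measure_mono_null _ hnull
        intro x hx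
        simp only [mem_setOf_eq, mem_preimage] at hx ⊢
        intro hcU
        apply hx
        have h1 : ContinuousAt (fun s : ℝ => U (s + x)) s₀ := by
          have hadd : ContinuousAt (fun s : ℝ => s + x) s₀ :=
            (continuous_id.add continuous_const).continuousAt
          have := ContinuousAt.comp (x := s₀) (g := U) (f := fun s : ℝ => s + x) hcU hadd
          exact this
        exact continuousAt_const.mul h1
      exact ae_restrict_of_ae hae
  have hanti : AntitoneOn (fun s => ∫ x in Ioi (0:ℝ), f x * U (s + x)) (Ici cN) := by
    intro s1 h1 s2 h2 h12
    apply integral_mono (hint s2) (hint s1)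
    intro x
    rcases le_or_gt x 0 with hx | hx
    · simp [hf0 x hx]
    · apply mul_le_mul_of_nonneg_left _ (hfnn x)
      apply hUanti (mem_Ici.2 (by linarith [mem_Ici.1 h1])) (mem_Ici.2 (by linarith [mem_Ici.1 h1]))
      linarith
  have hub : ∀ s, (∫ x in Ioi (0:ℝ), f x * U (s + x)) ≤ B := by
    intro s
    calc (∫ x in Ioi (0:ℝ), f x * U (s + x)) ≤ ∫ x in Ioi (0:ℝ), f x * B := by
          apply integral_mono (hint s) (hfint.mul_const B)
          intro x
          rcases le_or_gt x 0 with hx | hx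
          · simp [hf0 x hx]
          · exact mul_le_mul_of_nonneg_left (hUub _) (hfnn x)
      _ = 1 * B := by rw [integral_mul_const, hf1]
      _ = B := one_mul B
  have hlb : ∀ s, cN ≤ s → K' ≤ ∫ x in Ioi (0:ℝ), f x * U (s + x) := by
    intro s hs
    calc K' = 1 * K' := (one_mul K').symm
      _ = ∫ x in Ioi (0:ℝ), f x * K' := by rw [integral_mul_const, hf1]
      _ ≤ ∫ x in Ioi (0:ℝ), f x * U (s + x) := by
          apply integral_mono (hfint.mul_const K') (hint s)
          intro x
          rcases le_or_gt x 0 with hx | hx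
          · simp [hf0 x hx]
          · exact mul_le_mul_of_nonneg_left (hUge (s + x) (by linarith)) (hfnn x)
  exact ⟨hint, hcont, hanti, hub, hlb⟩


def GoodProp (cN t₀ θN θN' γ : ℝ) (f G : ℝ → ℝ) (Vseq : ℕ → ℝ → ℝ) (N k : ℕ) : Prop :=
  ∃ θ ∈ Set.Ioc cN θN, ∃ c ∈ Set.Ioc θN' cN, ∃ K : ℝ,
    (∀ s, cN ≤ s → s ≤ θ → Vseq k s = if k = N then G s
      else G s + γ * ∫ x in Set.Ioi (0:ℝ), f x * Vseq (k+1) (s+x)) ∧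
    (∀ s, θ < s → Vseq k s = if k = N then G c - G 0
      else (G c - G 0) + γ * ∫ x in Set.Ioi (0:ℝ), f x * Vseq (k+1) (c+x)) ∧
    Measurable (Vseq k) ∧
    {s | ¬ContinuousAt (Vseq k) s}.Countable ∧
    AntitoneOn (Vseq k) (Set.Ici cN) ∧
    (∀ s, θ < s → Vseq k s = K) ∧
    (∀ s, Vseq k s ≤ K + G 0) ∧
    (∀ r, BddBelow (Vseq k '' Set.Ici r))

theorem stmt_12
    (cN t₀ : ℝ) (G : ℝ → ℝ)
    (hcN : cN < 0) (ht₀ : 0 < t₀)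
    (hGcont : ContinuousOn G (Iio t₀))
    (hGinc : StrictMonoOn G (Iic cN))
    (hGdec : StrictAntiOn G (Ico cN t₀))
    (hGtop : Tendsto G (nhdsWithin t₀ (Iio t₀)) atBot)
    (hGbot : Tendsto G atBot atBot)
    (hG0 : 0 < G 0)
    (θN : ℝ) (hθN : θN ∈ Ioo cN t₀) (hGθN : G θN = G cN - G 0)
    (θN' : ℝ) (hθN' : θN' < cN) (hGθN' : G θN' = G cN - G 0)
    (f : ℝ → ℝ) (γ : ℝ)
    (hfm : Measurable f) (hf0 : ∀ x ≤ 0, f x = 0) (hfnn : ∀ x, 0 ≤ f x)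
    (hf1 : (∫ x in Ioi (0:ℝ), f x) = 1) (hγ : γ ∈ Ioo (0:ℝ) 1)
    (hfpos : ∀ᵐ x ∂volume, 0 < x → 0 < f x)
    (N : ℕ) (hN : 1 ≤ N)
    (Vseq : ℕ → ℝ → ℝ)
    (hterm : ∀ s, Vseq N s = if s < t₀
      then max (G s) (sSup ((fun a => G a - G 0) '' {a | a < s ∧ a < t₀}))
      else sSup ((fun a => G a - G 0) '' Iio t₀))
    (hrec : ∀ k, 1 ≤ k → k < N → ∀ s, Vseq k s = if s < t₀
      then max (G s + γ * ∫ x in Ioi (0:ℝ), f x * Vseq (k + 1) (s + x))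
        (sSup ((fun a => (G a - G 0) + γ * ∫ x in Ioi (0:ℝ), f x * Vseq (k + 1) (a + x)) ''
          {a | a < s ∧ a < t₀}))
      else sSup ((fun a => (G a - G 0) + γ * ∫ x in Ioi (0:ℝ), f x * Vseq (k + 1) (a + x)) ''
        Iio t₀)) :
    ∀ k, 1 ≤ k → k ≤ N →
      ∃ θk ∈ Ioc cN θN, ∃ ck ∈ Ioc θN' cN,
        (∀ s, cN ≤ s → s ≤ θk →
          Vseq k s = if k = N then G s
            else G s + γ * ∫ x in Ioi (0:ℝ), f x * Vseq (k + 1) (s + x)) ∧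
        (∀ s, θk < s →
          Vseq k s = if k = N then G ck - G 0
            else (G ck - G 0) + γ * ∫ x in Ioi (0:ℝ), f x * Vseq (k + 1) (ck + x)) := by
  have hfint : Integrable f (volume.restrict (Ioi (0:ℝ))) := by
    by_contra h
    rw [MeasureTheory.integral_undef h] at hf1
    exact one_ne_zero hf1.symm
  have key : ∀ d k, 1 ≤ k → k ≤ N → N - k = d → GoodProp cN t₀ θN θN' γ f G Vseq N k := by
    intro d
    induction d with
    | zero =>
      intro k hk1 hkN hd
      have hkN' : k = N := by omega
      subst hkN'
      obtain ⟨θ, hθ, c, hc, hlow, hhigh, hmeas, hcnt, hanti, hub, hlb⟩ :=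
        master_step cN t₀ G hcN ht₀ hGcont hGinc hGdec hGtop hGbot hG0 θN hθN hGθN θN' hθN'
          hGθN' (fun _ => (0:ℝ)) 0 le_rfl hG0 continuous_const (antitoneOn_const)
          (fun a => by simp) (Vseq k) (fun s => by simpa using hterm s)
      refine ⟨θ, hθ, c, hc, G c - G 0, ?_, ?_, hmeas, hcnt, hanti, ?_, ?_, hlb⟩
      · intro s h1 h2; rw [if_pos rfl]; simpa using hlow s ⟨h1, h2⟩
      · intro s h1; rw [if_pos rfl]; simpa using hhigh s h1
      · intro s h1; simpa using hhigh s h1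
      · intro s; simpa using hub s
    | succ d ih =>
      intro k hk1 hkN hd
      have hkltN : k < N := by omega
      obtain ⟨θ₁, hθ₁, c₁, hc₁, K₁, b1₁, b2₁, hmeas₁, hcnt₁, hanti₁, hK₁, hub₁, hlb₁⟩ :=
        ih (k+1) (by omega) (by omega) (by omega)
      have hUge : ∀ t, cN ≤ t → K₁ ≤ Vseq (k+1) t := by
        intro t ht
        rcases le_or_gt t θ₁ with h | h
        · have h1 : Vseq (k+1) (θ₁+1) = K₁ := hK₁ _ (by linarith)
          have hmem2 : θ₁ + 1 ∈ Ici cN := mem_Ici.2 (by linarith [hθ₁.1])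
          have h2 := hanti₁ (mem_Ici.2 ht) hmem2 (by linarith)
          rw [h1] at h2; exact h2
        · exact (hK₁ t h).ge
      obtain ⟨hint, hWcont, hWanti, hWub, hWlb⟩ :=
        cont_step cN f hfm hf0 hfnn hfint hf1 (Vseq (k+1)) K₁ (K₁ + G 0)
          hmeas₁ hcnt₁ hanti₁ hUge hub₁ hlb₁
      have hγ0 : (0:ℝ) ≤ γ := hγ.1.le
      have hEcont : Continuous (fun s => γ * ∫ x in Ioi (0:ℝ), f x * Vseq (k+1) (s + x)) :=
        continuous_const.mul hWcont
      have hEanti : AntitoneOn (fun s => γ * ∫ x in Ioi (0:ℝ), f x * Vseq (k+1) (s + x))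
          (Ici cN) := fun a ha b hb hab => mul_le_mul_of_nonneg_left (hWanti ha hb hab) hγ0
      have hEbd : ∀ a, (γ * ∫ x in Ioi (0:ℝ), f x * Vseq (k+1) (a + x))
          ≤ (γ * ∫ x in Ioi (0:ℝ), f x * Vseq (k+1) (cN + x)) + γ * G 0 := by
        intro a
        have h1 := mul_le_mul_of_nonneg_left (hWub a) hγ0
        have h2 := mul_le_mul_of_nonneg_left (hWlb cN le_rfl) hγ0
        have h3 : γ * (K₁ + G 0) = γ * K₁ + γ * G 0 := by ring
        linarith
      have hε : γ * G 0 < G 0 := by nlinarith [mul_pos (sub_pos.2 hγ.2) hG0]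
      obtain ⟨θ, hθ, c, hc, hlow, hhigh, hmeas, hcnt, hanti, hub, hlb⟩ :=
        master_step cN t₀ G hcN ht₀ hGcont hGinc hGdec hGtop hGbot hG0 θN hθN hGθN θN' hθN'
          hGθN' (fun s => γ * ∫ x in Ioi (0:ℝ), f x * Vseq (k+1) (s + x)) (γ * G 0)
          (mul_nonneg hγ0 hG0.le) hε hEcont hEanti hEbd (Vseq k)
          (fun s => by simpa using hrec k hk1 hkltN s)
      have hkne : k ≠ N := Nat.ne_of_lt hkltN
      refine ⟨θ, hθ, c, hc, G c - G 0 + γ * ∫ x in Ioi (0:ℝ), f x * Vseq (k+1) (c + x),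
        ?_, ?_, hmeas, hcnt, hanti, ?_, ?_, hlb⟩
      · intro s h1 h2; rw [if_neg hkne]; exact hlow s ⟨h1, h2⟩
      · intro s h1; rw [if_neg hkne]; exact hhigh s h1
      · intro s h1; exact hhigh s h1
      · intro s; exact hub s
  intro k hk1 hkN
  obtain ⟨θ, hθ, c, hc, K, b1, b2, _⟩ := key (N - k) k hk1 hkN rfl
  exact ⟨θ, hθ, c, hc, b1, b2⟩
end

section
/- If V is a Bellman fixed point, then for all s₁ < s₂ one has V(s₂) − V(s₁) ≥ −G(0). -/
open MeasureTheory Set Filter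

theorem stmt_13
    (cN t₀ : ℝ) (G : ℝ → ℝ)
    (hcN : cN < 0) (ht₀ : 0 < t₀)
    (hGcont : ContinuousOn G (Iio t₀))
    (hGinc : StrictMonoOn G (Iic cN))
    (hGdec : StrictAntiOn G (Ico cN t₀))
    (hGtop : Tendsto G (nhdsWithin t₀ (Iio t₀)) atBot)
    (hGbot : Tendsto G atBot atBot)
    (hG0 : 0 < G 0)
    (f : ℝ → ℝ) (γ : ℝ)
    (hfm : Measurable f) (hf0 : ∀ x ≤ 0, f x = 0) (hfnn : ∀ x, 0 ≤ f x)
    (hf1 : (∫ x in Ioi (0:ℝ), f x) = 1) (hγ : γ ∈ Ioo (0:ℝ) 1)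
    (V : ℝ → ℝ) (hVm : Measurable V)
    (hVub : BddAbove (range V))
    (hVlb : ∀ r : ℝ, BddBelow (V '' Ici r))
    (hfix : ∀ s, V s = if s < t₀
      then max (G s + γ * ∫ x in Ioi (0:ℝ), f x * V (s + x))
        (sSup ((fun a => (G a - G 0) + γ * ∫ x in Ioi (0:ℝ), f x * V (a + x)) ''
          {a | a < s ∧ a < t₀}))
      else sSup ((fun a => (G a - G 0) + γ * ∫ x in Ioi (0:ℝ), f x * V (a + x)) '' Iio t₀)) :
    ∀ s₁ s₂ : ℝ, s₁ < s₂ → -G 0 ≤ V s₂ - V s₁ := by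
  obtain ⟨M, hM'⟩ := hVub
  have hM : ∀ y, V y ≤ M := fun y => hM' (mem_range_self y)
  set Q : ℝ → ℝ := fun a => (G a - G 0) + γ * ∫ x in Ioi (0:ℝ), f x * V (a + x) with hQdef
  have hfint : IntegrableOn f (Ioi (0:ℝ)) := by
    by_contra h
    rw [integral_undef h] at hf1
    norm_num at hf1
  have hint : ∀ a : ℝ, IntegrableOn (fun x => f x * V (a + x)) (Ioi (0:ℝ)) := by
    intro a
    obtain ⟨c, hc⟩ := hVlb a
    have hc' : ∀ y, a ≤ y → c ≤ V y := fun y hy => hc ⟨y, hy, rfl⟩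
    refine Integrable.mono' (hfint.mul_const (max |c| |M|))
      (hfm.mul (hVm.comp (measurable_const_add a))).aestronglyMeasurable ?_
    refine (ae_restrict_iff' measurableSet_Ioi).2 (ae_of_all _ fun x hx => ?_)
    rw [Real.norm_eq_abs, abs_mul, abs_of_nonneg (hfnn x)]
    refine mul_le_mul_of_nonneg_left ?_ (hfnn x)
    rw [abs_le]
    have hax : a ≤ a + x := by linarith [mem_Ioi.1 hx]
    constructor
    · have := hc' (a + x) hax
      have : -|c| ≤ c := neg_abs_le c
      linarith [hc' (a + x) hax, neg_abs_le c, le_max_left |c| |M|]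
    · linarith [hM (a + x), le_abs_self M, le_max_right |c| |M|]
  have hIle : ∀ a : ℝ, (∫ x in Ioi (0:ℝ), f x * V (a + x)) ≤ M := by
    intro a
    have h1 : (∫ x in Ioi (0:ℝ), f x * V (a + x)) ≤ ∫ x in Ioi (0:ℝ), f x * M :=
      setIntegral_mono_on (hint a) (hfint.mul_const M) measurableSet_Ioi
        (fun x _ => mul_le_mul_of_nonneg_left (hM _) (hfnn x))
    rwa [integral_mul_const, hf1, one_mul] at h1
  have hGle : ∀ a < t₀, G a ≤ G cN := by
    intro a ha
    rcases le_or_gt a cN with h | h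
    · exact hGinc.monotoneOn (mem_Iic.2 h) (mem_Iic.2 le_rfl) h
    · exact hGdec.antitoneOn ⟨le_rfl, hcN.trans ht₀⟩ ⟨h.le, ha⟩ h.le
  have hQle : ∀ a ∈ Iio t₀, Q a ≤ (G cN - G 0) + γ * M := by
    intro a ha
    exact add_le_add (by linarith [hGle a ha])
      (mul_le_mul_of_nonneg_left (hIle a) hγ.1.le)
  have hbdd : BddAbove (Q '' Iio t₀) :=
    ⟨(G cN - G 0) + γ * M, by rintro y ⟨a, ha, rfl⟩; exact hQle a ha⟩
  intro s₁ s₂ hs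
  set T : Set ℝ := {a | a < s₂ ∧ a < t₀} with hT
  have hTsub : T ⊆ Iio t₀ := fun a ha => ha.2
  have hbddT : BddAbove (Q '' T) := hbdd.mono (image_mono hTsub)
  have hVs₂ : sSup (Q '' T) ≤ V s₂ := by
    rw [hfix s₂]
    by_cases h2 : s₂ < t₀
    · rw [if_pos h2]; exact le_max_right _ _
    · rw [if_neg h2]
      have hTeq : T = Iio t₀ := by
        ext a
        exact ⟨fun h => h.2, fun h => ⟨h.trans_le (not_lt.1 h2), h⟩⟩
      rw [hTeq]
  by_cases h1 : s₁ < t₀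
  · have hs₁T : s₁ ∈ T := ⟨hs, h1⟩
    have hQs₁ : Q s₁ ≤ sSup (Q '' T) := le_csSup hbddT ⟨s₁, hs₁T, rfl⟩
    have hS₁sub : {a : ℝ | a < s₁ ∧ a < t₀} ⊆ T := fun a ha => ⟨ha.1.trans hs, ha.2⟩
    have hne : {a : ℝ | a < s₁ ∧ a < t₀}.Nonempty :=
      ⟨min s₁ t₀ - 1, by
        constructor
        · linarith [min_le_left s₁ t₀]
        · linarith [min_le_right s₁ t₀]⟩
    have hsup₁ : sSup (Q '' {a : ℝ | a < s₁ ∧ a < t₀}) ≤ sSup (Q '' T) :=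
      csSup_le_csSup hbddT (hne.image Q) (image_mono hS₁sub)
    rw [hfix s₁, if_pos h1]
    have hmerge : G s₁ + γ * ∫ x in Ioi (0:ℝ), f x * V (s₁ + x) = Q s₁ + G 0 := by
      rw [hQdef]; ring
    rw [hmerge]
    have hmax : max (Q s₁ + G 0) (sSup (Q '' {a : ℝ | a < s₁ ∧ a < t₀}))
        ≤ sSup (Q '' T) + G 0 :=
      max_le (by linarith) (by linarith)
    linarith
  · have h2 : ¬ s₂ < t₀ := fun h => h1 (hs.trans h)
    rw [hfix s₁, if_neg h1, hfix s₂, if_neg h2]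
    linarith
end

section
/- Let V : ℝ → ℝ be measurable, bounded above, and satisfy V(y) − V(x) ≥ −G(0) whenever x < y. Then for every state s < c_N and every non-merging action a < s: Q_V(s, s) − Q_V(s, a) ≥ G(s) − H(a) − γ G(0) > (1 − γ) G(0) > 0. -/
open MeasureTheory Set Filter

theorem stmt_14
    (cN t₀ : ℝ) (G : ℝ → ℝ)
    (hcN : cN < 0) (ht₀ : 0 < t₀)
    (hGcont : ContinuousOn G (Iio t₀))
    (hGinc : StrictMonoOn G (Iic cN))
    (hGdec : StrictAntiOn G (Ico cN t₀))
    (hGtop : Tendsto G (nhdsWithin t₀ (Iio t₀)) atBot)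
    (hGbot : Tendsto G atBot atBot)
    (hG0 : 0 < G 0)
    (f : ℝ → ℝ) (γ : ℝ)
    (hfm : Measurable f) (hf0 : ∀ x ≤ 0, f x = 0) (hfnn : ∀ x, 0 ≤ f x)
    (hf1 : (∫ x in Ioi (0:ℝ), f x) = 1) (hγ : γ ∈ Ioo (0:ℝ) 1)
    (V : ℝ → ℝ) (hVm : Measurable V)
    (hVub : BddAbove (range V))
    (hVdiff : ∀ x y : ℝ, x < y → -G 0 ≤ V y - V x) :
    ∀ s, s < cN → ∀ a, a < s →
      (G s - (G a - G 0) - γ * G 0 ≤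
        (G s + γ * ∫ x in Ioi (0:ℝ), f x * V (s + x)) -
          ((G a - G 0) + γ * ∫ x in Ioi (0:ℝ), f x * V (a + x))) ∧
      (1 - γ) * G 0 < G s - (G a - G 0) - γ * G 0 ∧
      0 < (1 - γ) * G 0 := by
  intro s hs a ha
  obtain ⟨hγ0, hγ1⟩ := hγ
  -- f is integrable on Ioi 0
  have hfint : IntegrableOn f (Ioi (0:ℝ)) := by
    by_contra h
    rw [integral_undef h] at hf1
    norm_num at hf1
  obtain ⟨M, hM⟩ := hVub
  -- integrability of x ↦ f x * V (c + x)
  have key : ∀ c : ℝ, IntegrableOn (fun x => f x * V (c + x)) (Ioi (0:ℝ)) := by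
    intro c
    set C : ℝ := max |M| |V c - G 0| with hC
    apply Integrable.mono' (g := fun x => f x * C) (hfint.mul_const C)
    · exact ((hfm.mul (hVm.comp (measurable_const_add c))).aestronglyMeasurable)
    · filter_upwards [ae_restrict_mem measurableSet_Ioi] with x hx
      have hxpos : (0:ℝ) < x := hx
      have h1 : V (c + x) ≤ M := hM (mem_range_self _)
      have h2 : V c - G 0 ≤ V (c + x) := by
        have := hVdiff c (c + x) (by linarith)
        linarith
      have habs : |V (c + x)| ≤ C := by
        rw [abs_le]
        have hb1 : |V c - G 0| ≤ C := le_max_right _ _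
        have hb2 : -|V c - G 0| ≤ V c - G 0 := neg_abs_le _
        exact ⟨by linarith, h1.trans ((le_abs_self M).trans (le_max_left _ _))⟩
      have : ‖f x * V (c + x)‖ = f x * |V (c + x)| := by
        rw [norm_mul, Real.norm_eq_abs, Real.norm_eq_abs, abs_of_nonneg (hfnn x)]
      rw [this]
      exact mul_le_mul_of_nonneg_left habs (hfnn x)
  have hGs : G a < G s := hGinc (mem_Iic.mpr (ha.trans hs).le) (mem_Iic.mpr hs.le) ha
  refine ⟨?_, by linarith, by nlinarith⟩
  -- main inequality: ∫ f (V(a+x) - V(s+x)) ≤ G 0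
  have hint : (∫ x in Ioi (0:ℝ), f x * V (a + x)) - (∫ x in Ioi (0:ℝ), f x * V (s + x))
      ≤ G 0 := by
    have hsub : (∫ x in Ioi (0:ℝ), f x * V (a + x)) - (∫ x in Ioi (0:ℝ), f x * V (s + x))
        = ∫ x in Ioi (0:ℝ), (f x * V (a + x) - f x * V (s + x)) := by
      rw [integral_sub (key a) (key s)]
    rw [hsub]
    have hle : (∫ x in Ioi (0:ℝ), (f x * V (a + x) - f x * V (s + x)))
        ≤ ∫ x in Ioi (0:ℝ), f x * G 0 := by
      apply setIntegral_mono_on ((key a).sub (key s)) (hfint.mul_const _) measurableSet_Ioi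
      intro x hx
      simp only [Pi.sub_apply]
      have hxpos : (0:ℝ) < x := hx
      have hd : V (a + x) - V (s + x) ≤ G 0 := by
        have := hVdiff (a + x) (s + x) (by linarith)
        linarith
      have : f x * V (a + x) - f x * V (s + x) = f x * (V (a + x) - V (s + x)) := by ring
      rw [this]
      exact mul_le_mul_of_nonneg_left hd (hfnn x)
    calc _ ≤ ∫ x in Ioi (0:ℝ), f x * G 0 := hle
      _ = G 0 := by rw [integral_mul_const, hf1, one_mul]
  nlinarith [hint, hγ0.le]
end

section
/- If V is a Bellman fixed point, then for every state s < c_N merging is the unique optimal action: V(s) = Q_V(s, s) = G(s) + γ ∫₀^∞ f(x) V(s + x) dx, and Q_V(s, s) > Q_V(s, a) for every non-merging action a < s. -/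
open MeasureTheory Set Filter

theorem stmt_15
    (cN t₀ : ℝ) (G : ℝ → ℝ)
    (hcN : cN < 0) (ht₀ : 0 < t₀)
    (hGcont : ContinuousOn G (Iio t₀))
    (hGinc : StrictMonoOn G (Iic cN))
    (hGdec : StrictAntiOn G (Ico cN t₀))
    (hGtop : Tendsto G (nhdsWithin t₀ (Iio t₀)) atBot)
    (hGbot : Tendsto G atBot atBot)
    (hG0 : 0 < G 0)
    (f : ℝ → ℝ) (γ : ℝ)
    (hfm : Measurable f) (hf0 : ∀ x ≤ 0, f x = 0) (hfnn : ∀ x, 0 ≤ f x)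
    (hf1 : (∫ x in Ioi (0:ℝ), f x) = 1) (hγ : γ ∈ Ioo (0:ℝ) 1)
    (V : ℝ → ℝ) (hVm : Measurable V)
    (hVub : BddAbove (range V))
    (hVlb : ∀ r : ℝ, BddBelow (V '' Ici r))
    (hfix : ∀ s, V s = if s < t₀
      then max (G s + γ * ∫ x in Ioi (0:ℝ), f x * V (s + x))
        (sSup ((fun a => (G a - G 0) + γ * ∫ x in Ioi (0:ℝ), f x * V (a + x)) ''
          {a | a < s ∧ a < t₀}))
      else sSup ((fun a => (G a - G 0) + γ * ∫ x in Ioi (0:ℝ), f x * V (a + x)) '' Iio t₀)) :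
    ∀ s, s < cN →
      V s = G s + γ * ∫ x in Ioi (0:ℝ), f x * V (s + x) ∧
      ∀ a, a < s →
        (G a - G 0) + (γ * ∫ x in Ioi (0:ℝ), f x * V (a + x)) <
          G s + γ * ∫ x in Ioi (0:ℝ), f x * V (s + x) := by
  obtain ⟨hγ0, hγ1⟩ := hγ
  obtain ⟨S, hSub⟩ := hVub
  have hSle : ∀ y, V y ≤ S := fun y => hSub (Set.mem_range_self y)
  set W : ℝ → ℝ := fun a => (G a - G 0) + γ * ∫ x in Ioi (0:ℝ), f x * V (a + x) with hWdef
  -- f is integrable on Ioi 0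
  have hfi : IntegrableOn f (Ioi (0:ℝ)) := by
    by_contra h
    rw [MeasureTheory.integral_undef h] at hf1
    norm_num at hf1
  -- integrability of f * V(c+·)
  have hVint : ∀ c : ℝ, IntegrableOn (fun x => f x * V (c + x)) (Ioi (0:ℝ)) := by
    intro c
    obtain ⟨L, hL⟩ := hVlb c
    have hLle : ∀ y, c ≤ y → L ≤ V y := fun y hy => hL ⟨y, hy, rfl⟩
    refine Integrable.mono' (hfi.mul_const (max |L| |S|)) ?_ ?_
    · exact (hfm.mul (hVm.comp (measurable_const_add c))).aestronglyMeasurable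
    · refine (ae_restrict_iff' measurableSet_Ioi).mpr (ae_of_all _ fun x hx => ?_)
      have hx0 : (0:ℝ) < x := hx
      have h1 : L ≤ V (c + x) := hLle _ (by linarith)
      have h2 : V (c + x) ≤ S := hSle _
      rw [norm_mul, Real.norm_eq_abs, Real.norm_eq_abs, abs_of_nonneg (hfnn x)]
      refine mul_le_mul_of_nonneg_left ?_ (hfnn x)
      rw [abs_le]
      constructor
      · have := neg_abs_le L; have := le_max_left |L| |S|; linarith
      · have := le_abs_self S; have := le_max_right |L| |S|; linarith
  have hIleS : ∀ c : ℝ, (∫ x in Ioi (0:ℝ), f x * V (c + x)) ≤ S := by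
    intro c
    have h1 : (∫ x in Ioi (0:ℝ), f x * V (c + x)) ≤ ∫ x in Ioi (0:ℝ), f x * S :=
      setIntegral_mono_on (hVint c) (hfi.mul_const S) measurableSet_Ioi
        (fun x _ => mul_le_mul_of_nonneg_left (hSle _) (hfnn x))
    rwa [integral_mul_const, hf1, one_mul] at h1
  have hGle : ∀ a, a < t₀ → G a ≤ G cN := by
    intro a ha
    rcases le_or_gt a cN with h | h
    · exact hGinc.monotoneOn (mem_Iic.mpr h) (mem_Iic.mpr le_rfl) h
    · exact (hGdec (left_mem_Ico.mpr (hcN.trans ht₀)) ⟨h.le, ha⟩ h).le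
  have hWle : ∀ a, a < t₀ → W a ≤ G cN - G 0 + γ * S := by
    intro a ha
    have h1 := mul_le_mul_of_nonneg_left (hIleS a) hγ0.le
    have h2 := hGle a ha
    simp only [hWdef]
    linarith
  have hBdd1 : ∀ A : Set ℝ, A ⊆ Iio t₀ → BddAbove (W '' A) := by
    intro A hA
    refine ⟨G cN - G 0 + γ * S, ?_⟩
    rintro w ⟨a, haA, rfl⟩
    exact hWle a (hA haA)
  have hne : ∀ z : ℝ, {a : ℝ | a < z ∧ a < t₀}.Nonempty := by
    intro z
    refine ⟨min z t₀ - 1, ?_, ?_⟩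
    · have := min_le_left z t₀; linarith
    · have := min_le_right z t₀; linarith
  have hVz : ∀ a z : ℝ, a < z → a < t₀ → W a ≤ V z := by
    intro a z haz hat
    rcases lt_or_ge z t₀ with hz | hz
    · rw [hfix z, if_pos hz]
      refine le_max_of_le_right (le_csSup (hBdd1 _ (fun x hx => hx.2)) ?_)
      exact ⟨a, ⟨haz, hat⟩, rfl⟩
    · rw [hfix z, if_neg (not_lt.mpr hz)]
      exact le_csSup (hBdd1 _ (fun x hx => hx)) ⟨a, hat, rfl⟩
  -- key monotonicity-type lemma: V y ≤ V z + G 0 whenever y < z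
  have hB : ∀ y z : ℝ, y < z → V y ≤ V z + G 0 := by
    intro y z hyz
    rcases lt_or_ge y t₀ with hy | hy
    · rw [hfix y, if_pos hy]
      refine max_le ?_ ?_
      · have h1 : W y ≤ V z := hVz y z hyz hy
        have h2 : G y + γ * ∫ x in Ioi (0:ℝ), f x * V (y + x) = W y + G 0 := by
          simp only [hWdef]; ring
        rw [h2]; linarith
      · refine csSup_le ((hne y).image W) ?_
        rintro w ⟨a, ⟨hay, hat⟩, rfl⟩
        have := hVz a z (hay.trans hyz) hat
        linarith
    · rw [hfix y, if_neg (not_lt.mpr hy)]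
      refine csSup_le ⟨W (t₀ - 1), ⟨t₀ - 1, mem_Iio.mpr (by linarith), rfl⟩⟩ ?_
      rintro w ⟨a, hat, rfl⟩
      have hat' : a < t₀ := hat
      have := hVz a z (lt_of_lt_of_le hat' (hy.trans hyz.le)) hat'
      linarith
  intro s hs
  have hst : s < t₀ := hs.trans (hcN.trans ht₀)
  have hkey : ∀ a, a < s → W a < G s + γ * ∫ x in Ioi (0:ℝ), f x * V (s + x) := by
    intro a ha
    have hIcomp : (∫ x in Ioi (0:ℝ), f x * V (a + x)) ≤
        (∫ x in Ioi (0:ℝ), f x * V (s + x)) + G 0 := by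
      have h1 : (∫ x in Ioi (0:ℝ), f x * V (a + x)) ≤
          ∫ x in Ioi (0:ℝ), (f x * V (s + x) + f x * G 0) := by
        refine setIntegral_mono_on (hVint a) ((hVint s).add (hfi.mul_const (G 0)))
          measurableSet_Ioi ?_
        intro x _
        have hb := hB (a + x) (s + x) (by linarith)
        exact le_of_le_of_eq (mul_le_mul_of_nonneg_left hb (hfnn x)) (by ring)
      rwa [integral_add (hVint s) (hfi.mul_const (G 0)), integral_mul_const, hf1,
        one_mul] at h1
    have hGa : G a < G s := hGinc (mem_Iic.mpr (by linarith)) (mem_Iic.mpr hs.le) ha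
    have h2 := mul_le_mul_of_nonneg_left hIcomp hγ0.le
    have h3 : γ * G 0 < G 0 := mul_lt_of_lt_one_left hG0 hγ1
    have h4 : γ * ((∫ x in Ioi (0:ℝ), f x * V (s + x)) + G 0) =
        γ * (∫ x in Ioi (0:ℝ), f x * V (s + x)) + γ * G 0 := by ring
    rw [h4] at h2
    simp only [hWdef]
    linarith
  refine ⟨?_, fun a ha => hkey a ha⟩
  rw [hfix s, if_pos hst]
  refine max_eq_left (csSup_le ((hne s).image W) ?_)
  rintro w ⟨a, ⟨ha, _⟩, rfl⟩
  exact (hkey a ha).le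
end

section
/- Let V be a Bellman fixed point that is continuous and antitone on [c_N, ∞), and assume f > 0 almost everywhere on (0, ∞). Then the optimal stationary policy is threshold-based: there exist a threshold θ ∈ [c_N, θ_N] and a constant time reduction c ∈ [θ'_N, c_N] such that for every s ≤ θ the merging action attains the supremum, V(s) = Q_V(s, s), and for every s > θ the non-merging action c attains the supremum, V(s) = Q_V(s, c). Moreover, setting Z := V(θ), the optimal value function satisfies V(s) = Z for all s > θ and V(s) = G(s) + γ ∫₀^∞ f(x) V(s + x) dx for all s ≤ θ. -/
open MeasureTheory Set Filter

theorem stmt_16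
    (cN t₀ : ℝ) (G : ℝ → ℝ)
    (hcN : cN < 0) (ht₀ : 0 < t₀)
    (hGcont : ContinuousOn G (Iio t₀))
    (hGinc : StrictMonoOn G (Iic cN))
    (hGdec : StrictAntiOn G (Ico cN t₀))
    (hGtop : Tendsto G (nhdsWithin t₀ (Iio t₀)) atBot)
    (hGbot : Tendsto G atBot atBot)
    (hG0 : 0 < G 0)
    (θN : ℝ) (hθN : θN ∈ Ioo cN t₀) (hGθN : G θN = G cN - G 0)
    (θN' : ℝ) (hθN' : θN' < cN) (hGθN' : G θN' = G cN - G 0)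
    (f : ℝ → ℝ) (γ : ℝ)
    (hfm : Measurable f) (hf0 : ∀ x ≤ 0, f x = 0) (hfnn : ∀ x, 0 ≤ f x)
    (hf1 : (∫ x in Ioi (0:ℝ), f x) = 1) (hγ : γ ∈ Ioo (0:ℝ) 1)
    (hfpos : ∀ᵐ x ∂volume, 0 < x → 0 < f x)
    (V : ℝ → ℝ) (hVm : Measurable V)
    (hVub : BddAbove (range V))
    (hVlb : ∀ r : ℝ, BddBelow (V '' Ici r))
    (hfix : ∀ s, V s = if s < t₀
      then max (G s + γ * ∫ x in Ioi (0:ℝ), f x * V (s + x))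
        (sSup ((fun a => (G a - G 0) + γ * ∫ x in Ioi (0:ℝ), f x * V (a + x)) ''
          {a | a < s ∧ a < t₀}))
      else sSup ((fun a => (G a - G 0) + γ * ∫ x in Ioi (0:ℝ), f x * V (a + x)) '' Iio t₀))
    (hVcont : Continuous V)
    (hVanti : AntitoneOn V (Ici cN)) :
    ∃ θ ∈ Icc cN θN, ∃ c ∈ Icc θN' cN,
      (∀ s, s ≤ θ → V s = G s + γ * ∫ x in Ioi (0:ℝ), f x * V (s + x)) ∧
      (∀ s, θ < s → V s = (G c - G 0) + γ * ∫ x in Ioi (0:ℝ), f x * V (c + x)) ∧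
      (∀ s, θ < s → V s = V θ) := by
  obtain ⟨hγ0, hγ1⟩ := hγ
  obtain ⟨U₀, hU₀mem⟩ := hVub
  have hU₀ : ∀ t, V t ≤ U₀ := fun t => hU₀mem ⟨t, rfl⟩
  have hγG0 : γ * G 0 ≤ G 0 := by nlinarith
  have hfi : IntegrableOn f (Ioi (0:ℝ)) := by
    by_contra h
    rw [integral_undef h] at hf1
    exact one_ne_zero hf1.symm
  have hVmeas : ∀ a : ℝ, Measurable fun x => f x * V (a + x) :=
    fun a => hfm.mul (hVm.comp (measurable_const_add a))
  have hint : ∀ a : ℝ, IntegrableOn (fun x => f x * V (a + x)) (Ioi 0) := by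
    intro a
    obtain ⟨L, hLmem⟩ := hVlb a
    have hL : ∀ t, a ≤ t → L ≤ V t := fun t ht => hLmem ⟨t, ht, rfl⟩
    refine Integrable.mono' (hfi.mul_const (max |U₀| |L|))
      ((hVmeas a).aestronglyMeasurable) ?_
    refine (ae_restrict_iff' measurableSet_Ioi).2 (ae_of_all _ fun x hx => ?_)
    have hx' : (0:ℝ) < x := hx
    have h1 : V (a + x) ≤ max |U₀| |L| :=
      le_trans (hU₀ _) (le_trans (le_abs_self _) (le_max_left _ _))
    have h2 : -(max |U₀| |L|) ≤ V (a + x) := by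
      have ha1 := hL (a + x) (by linarith)
      have ha2 := neg_abs_le L
      have ha3 := le_max_right |U₀| |L|
      linarith
    rw [Real.norm_eq_abs, abs_mul, abs_of_nonneg (hfnn x)]
    exact mul_le_mul_of_nonneg_left (abs_le.2 ⟨h2, h1⟩) (hfnn x)
  set W : ℝ → ℝ := fun a => ∫ x in Ioi (0:ℝ), f x * V (a + x) with hWdef
  set M : ℝ → ℝ := fun a => (G a - G 0) + γ * W a with hMdef
  set Qm : ℝ → ℝ := fun s => G s + γ * W s with hQmdef
  have hfix' : ∀ s, V s = if s < t₀
      then max (Qm s) (sSup (M '' {a | a < s ∧ a < t₀}))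
      else sSup (M '' Iio t₀) := by
    intro s
    simpa only [hQmdef, hMdef, hWdef] using hfix s
  have hWle_of : ∀ (a C : ℝ), (∀ x : ℝ, 0 < x → V (a + x) ≤ C) → W a ≤ C := by
    intro a C h
    have h1 : (∫ x in Ioi (0:ℝ), f x * V (a + x)) ≤ ∫ x in Ioi (0:ℝ), f x * C := by
      refine setIntegral_mono_on (hint a) (hfi.mul_const C) measurableSet_Ioi fun x hx => ?_
      exact mul_le_mul_of_nonneg_left (h x hx) (hfnn x)
    have h2 : (∫ x in Ioi (0:ℝ), f x * C) = C := by rw [integral_mul_const, hf1, one_mul]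
    simp only [hWdef]
    linarith
  have hWge_of : ∀ (a C : ℝ), (∀ x : ℝ, 0 < x → C ≤ V (a + x)) → C ≤ W a := by
    intro a C h
    have h1 : (∫ x in Ioi (0:ℝ), f x * C) ≤ ∫ x in Ioi (0:ℝ), f x * V (a + x) := by
      refine setIntegral_mono_on (hfi.mul_const C) (hint a) measurableSet_Ioi fun x hx => ?_
      exact mul_le_mul_of_nonneg_left (h x hx) (hfnn x)
    have h2 : (∫ x in Ioi (0:ℝ), f x * C) = C := by rw [integral_mul_const, hf1, one_mul]
    simp only [hWdef]
    linarith
  have hWmono : ∀ a b : ℝ, a ≤ b → cN ≤ a → W b ≤ W a := by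
    intro a b hab ha
    simp only [hWdef]
    refine setIntegral_mono_on (hint b) (hint a) measurableSet_Ioi fun x hx => ?_
    have hx' : (0:ℝ) < x := hx
    refine mul_le_mul_of_nonneg_left ?_ (hfnn x)
    exact hVanti (mem_Ici.2 (by linarith)) (mem_Ici.2 (by linarith)) (by linarith)
  have hGmax : ∀ a, a < t₀ → G a ≤ G cN := by
    intro a ha
    rcases le_or_gt a cN with h | h
    · exact hGinc.monotoneOn (mem_Iic.2 h) (mem_Iic.2 le_rfl) h
    · exact (hGdec (left_mem_Ico.2 (by linarith)) ⟨h.le, ha⟩ h).le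
  have hWleU₀ : ∀ a, W a ≤ U₀ := fun a => hWle_of a U₀ fun x _ => hU₀ _
  have hMbdd : BddAbove (M '' Iio t₀) := by
    refine ⟨G cN - G 0 + γ * U₀, ?_⟩
    rintro _ ⟨a, ha, rfl⟩
    have h1 := hGmax a ha
    have h2 := mul_le_mul_of_nonneg_left (hWleU₀ a) hγ0.le
    simp only [hMdef]
    linarith
  have hSbdd : ∀ s : ℝ, BddAbove (M '' {a | a < s ∧ a < t₀}) :=
    fun s => hMbdd.mono (image_mono fun a ha => ha.2)
  have hSne : ∀ s : ℝ, (M '' {a | a < s ∧ a < t₀}).Nonempty := by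
    intro s
    refine ⟨M (min s t₀ - 1), ⟨min s t₀ - 1, ⟨?_, ?_⟩, rfl⟩⟩
    · have := min_le_left s t₀; linarith
    · have := min_le_right s t₀; linarith
  set SU := sSup (M '' Iio t₀) with hSUdef
  have hSU_le : ∀ a, a < t₀ → M a ≤ SU := fun a ha => le_csSup hMbdd ⟨a, ha, rfl⟩
  have hVconst : ∀ s, t₀ ≤ s → V s = SU := by
    intro s hs; rw [hfix' s, if_neg (not_lt.2 hs)]
  have hSs_le : ∀ s : ℝ, sSup (M '' {a | a < s ∧ a < t₀}) ≤ SU := by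
    intro s
    exact csSup_le (hSne s) (by rintro _ ⟨a, ha, rfl⟩; exact hSU_le a ha.2)
  have hSs_in_V : ∀ s, s < t₀ → sSup (M '' {a | a < s ∧ a < t₀}) ≤ V s := by
    intro s hs; rw [hfix' s, if_pos hs]; exact le_max_right _ _
  have hVle : ∀ s, V s ≤ SU + G 0 := by
    intro s
    rcases lt_or_ge s t₀ with hs | hs
    · rw [hfix' s, if_pos hs]
      refine max_le ?_ (le_trans (hSs_le s) (by linarith))
      have h := hSU_le s hs
      simp only [hMdef] at h
      simp only [hQmdef]
      linarith
    · rw [hVconst s hs]; linarith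
  have hVgeZ : ∀ t, cN ≤ t → SU ≤ V t := by
    intro t ht
    rcases le_or_gt t₀ t with h | h
    · rw [hVconst t h]
    · have h1 : V t₀ ≤ V t := hVanti (mem_Ici.2 ht) (mem_Ici.2 (by linarith)) h.le
      have h2 := hVconst t₀ le_rfl
      linarith
  have hWgeSU : ∀ a, cN ≤ a → SU ≤ W a :=
    fun a ha => hWge_of a SU fun x hx => hVgeZ _ (by linarith)
  have hWleSU : ∀ a, W a ≤ SU + G 0 := fun a => hWle_of a _ fun x _ => hVle _
  have hkey : ∀ u v : ℝ, u ≤ v → V u ≤ V v + G 0 := by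
    intro u v huv
    rcases lt_or_ge v t₀ with hv | hv
    · rcases eq_or_lt_of_le huv with rfl | huv'
      · linarith
      · rw [hfix' u, if_pos (huv'.trans hv)]
        have h2 := hSs_in_V v hv
        refine max_le ?_ ?_
        · have h1 : M u ≤ sSup (M '' {a | a < v ∧ a < t₀}) :=
            le_csSup (hSbdd v) ⟨u, ⟨huv', huv'.trans hv⟩, rfl⟩
          simp only [hMdef] at h1
          simp only [hQmdef]
          linarith
        · have h3 : sSup (M '' {a | a < u ∧ a < t₀}) ≤ sSup (M '' {a | a < v ∧ a < t₀}) :=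
            csSup_le_csSup (hSbdd v) (hSne u) (image_mono fun a ha => ⟨ha.1.trans huv', ha.2⟩)
          linarith
    · rw [hVconst v hv]; exact hVle u
  have hWkey : ∀ u v : ℝ, u ≤ v → W u ≤ W v + G 0 := by
    intro u v huv
    have h1 : (∫ x in Ioi (0:ℝ), f x * V (u + x))
        ≤ ∫ x in Ioi (0:ℝ), (f x * V (v + x) + f x * G 0) := by
      refine setIntegral_mono_on (hint u) ((hint v).add (hfi.mul_const _))
        measurableSet_Ioi fun x hx => ?_
      have h := hkey (u + x) (v + x) (by linarith)
      calc f x * V (u + x) ≤ f x * (V (v + x) + G 0) :=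
            mul_le_mul_of_nonneg_left h (hfnn x)
        _ = f x * V (v + x) + f x * G 0 := mul_add _ _ _
    have h2 : (∫ x in Ioi (0:ℝ), (f x * V (v + x) + f x * G 0))
        = (∫ x in Ioi (0:ℝ), f x * V (v + x)) + G 0 := by
      rw [integral_add (hint v) (hfi.mul_const _), integral_mul_const, hf1, one_mul]
    simp only [hWdef]
    linarith
  have hWcont : Continuous W := by
    rw [continuous_iff_continuousAt]
    intro a₀
    obtain ⟨L, hLmem⟩ := hVlb (a₀ - 1)
    have hL : ∀ t, a₀ - 1 ≤ t → L ≤ V t := fun t ht => hLmem ⟨t, ht, rfl⟩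
    have key : ContinuousAt (fun a => ∫ x in Ioi (0:ℝ), f x * V (a + x)) a₀ := by
      apply continuousAt_of_dominated (bound := fun x => f x * max |U₀| |L|)
      · exact Eventually.of_forall fun a => (hVmeas a).aestronglyMeasurable
      · filter_upwards [Metric.ball_mem_nhds a₀ one_pos] with a ha
        refine (ae_restrict_iff' measurableSet_Ioi).2 (ae_of_all _ fun x hx => ?_)
        have hx' : (0:ℝ) < x := hx
        have ha' : a₀ - 1 < a := by
          have h := abs_lt.mp (by rwa [Metric.mem_ball, Real.dist_eq] at ha)
          linarith [h.1]
        have h1 : V (a + x) ≤ max |U₀| |L| :=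
          le_trans (hU₀ _) ((le_abs_self _).trans (le_max_left _ _))
        have h2 : -(max |U₀| |L|) ≤ V (a + x) := by
          have hg := hL (a + x) (by linarith)
          have hg2 := neg_abs_le L
          have hg3 := le_max_right |U₀| |L|
          linarith
        rw [Real.norm_eq_abs, abs_mul, abs_of_nonneg (hfnn x)]
        exact mul_le_mul_of_nonneg_left (abs_le.2 ⟨h2, h1⟩) (hfnn x)
      · exact hfi.mul_const _
      · exact ae_of_all _ fun x =>
          (continuous_const.mul (hVcont.comp (continuous_id.add continuous_const))).continuousAt
    rw [hWdef]
    exact key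
  have hMcont : ContinuousOn M (Iio t₀) := by
    rw [hMdef]
    exact (hGcont.sub continuousOn_const).add (continuous_const.mul hWcont).continuousOn
  have hQmcont : ContinuousOn Qm (Iio t₀) := by
    rw [hQmdef]
    exact hGcont.add (continuous_const.mul hWcont).continuousOn
  have hθNt₀ : θN < t₀ := hθN.2
  have hsubIcc : Icc θN' cN ⊆ Iio t₀ := fun a ha => lt_of_le_of_lt ha.2 (by linarith)
  obtain ⟨c, hcmem, hcmax⟩ :=
    isCompact_Icc.exists_isMaxOn (nonempty_Icc.2 hθN'.le) (hMcont.mono hsubIcc)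
  have hcmax' : ∀ a ∈ Icc θN' cN, M a ≤ M c := fun a ha => isMaxOn_iff.mp hcmax a ha
  have hct₀ : c < t₀ := hsubIcc hcmem
  have hMcN_le : M cN ≤ M c := hcmax' cN (right_mem_Icc.2 hθN'.le)
  have hMglobal : ∀ a, a < t₀ → M a ≤ M c := by
    intro a ha
    rcases le_or_gt a cN with h1 | h1
    · rcases le_or_gt θN' a with h2 | h2
      · exact hcmax' a ⟨h2, h1⟩
      · have hGa : G a < G θN' := hGinc (mem_Iic.2 (by linarith)) (mem_Iic.2 hθN'.le) h2
        have h3 := mul_le_mul_of_nonneg_left (hWleSU a) hγ0.le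
        have h4 := mul_le_mul_of_nonneg_left (hWgeSU cN le_rfl) hγ0.le
        have hMa : M a ≤ M cN := by
          simp only [hMdef]
          linarith
        linarith
    · have hGa : G a < G cN := hGdec (left_mem_Ico.2 (by linarith)) ⟨h1.le, ha⟩ h1
      have h3 := mul_le_mul_of_nonneg_left (hWmono cN a h1.le le_rfl) hγ0.le
      have : M a ≤ M cN := by simp only [hMdef]; linarith
      linarith
  have hSUc : SU = M c := by
    refine le_antisymm (csSup_le ⟨M c, c, hct₀, rfl⟩ ?_) (hSU_le c hct₀)
    rintro _ ⟨a, ha, rfl⟩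
    exact hMglobal a ha
  have hQmanti : ∀ s1 s2 : ℝ, cN ≤ s1 → s1 ≤ s2 → s2 < t₀ → Qm s2 ≤ Qm s1 := by
    intro s1 s2 h1 h12 h2
    rcases eq_or_lt_of_le h12 with rfl | h12'
    · exact le_rfl
    have hg : G s2 < G s1 := hGdec ⟨h1, by linarith⟩ ⟨by linarith, h2⟩ h12'
    have hw := mul_le_mul_of_nonneg_left (hWmono s1 s2 h12'.le h1) hγ0.le
    simp only [hQmdef]
    linarith
  have hQmθN : Qm θN ≤ SU := by
    have h3 := mul_le_mul_of_nonneg_left (hWmono cN θN hθN.1.le le_rfl) hγ0.le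
    have h4 : Qm θN ≤ M cN := by
      simp only [hQmdef, hMdef]
      linarith [hGθN]
    linarith [hMcN_le, hSUc]
  have hQmcN : SU ≤ Qm cN := by
    have hg : G c ≤ G cN := hGinc.monotoneOn (mem_Iic.2 hcmem.2) (mem_Iic.2 le_rfl) hcmem.2
    have h3 := mul_le_mul_of_nonneg_left (hWleSU c) hγ0.le
    have h1 : M c ≤ G cN - G 0 + γ * (SU + G 0) := by
      simp only [hMdef]
      linarith
    have h5 := mul_le_mul_of_nonneg_left (hWgeSU cN le_rfl) hγ0.le
    simp only [hQmdef]
    nlinarith [hSUc]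
  set T := Icc cN θN ∩ Qm ⁻¹' Ici SU with hTdef
  have hcNT : cN ∈ T := ⟨left_mem_Icc.2 hθN.1.le, hQmcN⟩
  have hTbdd : BddAbove T := ⟨θN, fun s hs => hs.1.2⟩
  have hTclosed : IsClosed T := by
    have h1 : ContinuousOn Qm (Icc cN θN) :=
      hQmcont.mono fun x hx => lt_of_le_of_lt hx.2 hθNt₀
    exact h1.preimage_isClosed_of_isClosed isClosed_Icc isClosed_Ici
  set θ := sSup T with hθdef
  have hθT : θ ∈ T := hTclosed.csSup_mem ⟨cN, hcNT⟩ hTbdd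
  have hθmem : θ ∈ Icc cN θN := hθT.1
  have hQmθ : SU ≤ Qm θ := hθT.2
  have hθub : ∀ s ∈ T, s ≤ θ := fun s hs => le_csSup hTbdd hs
  have hθt₀ : θ < t₀ := lt_of_le_of_lt hθmem.2 hθNt₀
  have hQmθeq : Qm θ = SU := by
    rcases eq_or_lt_of_le hθmem.2 with heq | hlt
    · rw [heq] at hQmθ ⊢
      exact le_antisymm hQmθN hQmθ
    · by_contra hne
      have hlt' : SU < Qm θ := lt_of_le_of_ne hQmθ (Ne.symm hne)
      have hcont : ContinuousAt Qm θ := hQmcont.continuousAt (Iio_mem_nhds hθt₀)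
      have h2 : Qm ⁻¹' Ioi SU ∈ nhdsWithin θ (Ioi θ) :=
        nhdsWithin_le_nhds (hcont.preimage_mem_nhds (Ioi_mem_nhds hlt'))
      have h3 : Iio θN ∈ nhdsWithin θ (Ioi θ) := nhdsWithin_le_nhds (Iio_mem_nhds hlt)
      have h4 : Ioi θ ∈ nhdsWithin θ (Ioi θ) := self_mem_nhdsWithin
      obtain ⟨s, ⟨hs1, hs2⟩, hs3⟩ :=
        Filter.nonempty_of_mem (inter_mem (inter_mem h2 h3) h4)
      have hsT : s ∈ T := ⟨⟨le_trans hθmem.1 (le_of_lt hs3), le_of_lt hs2⟩, le_of_lt (show SU < Qm s from hs1)⟩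
      exact absurd (hθub s hsT) (not_le.2 hs3)
  have hSs_eq : ∀ s, c < s → sSup (M '' {a | a < s ∧ a < t₀}) = SU := by
    intro s hcs
    refine le_antisymm (hSs_le s) ?_
    rw [hSUc]
    exact le_csSup (hSbdd s) ⟨c, ⟨hcs, hct₀⟩, rfl⟩
  have hA : ∀ s, s ≤ θ → V s = Qm s := by
    intro s hs
    have hst₀ : s < t₀ := lt_of_le_of_lt hs hθt₀
    rw [hfix' s, if_pos hst₀]
    refine max_eq_left ?_
    rcases le_or_gt s cN with h1 | h1
    · refine csSup_le (hSne s) ?_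
      rintro _ ⟨a, ⟨has, hat⟩, rfl⟩
      have hga : G a < G s := hGinc (mem_Iic.2 (by linarith)) (mem_Iic.2 h1) has
      have h3 := mul_le_mul_of_nonneg_left (hWkey a s has.le) hγ0.le
      simp only [hMdef, hQmdef]
      linarith
    · have h2 : Qm θ ≤ Qm s := hQmanti s θ h1.le hs hθt₀
      linarith [hSs_le s, hQmθ]
  have hB : ∀ s, θ < s → V s = M c := by
    intro s hs
    have hcs : c < s := lt_of_le_of_lt (le_trans hcmem.2 hθmem.1) hs
    rcases lt_or_ge s t₀ with hst | hst
    · have hQs : Qm s ≤ SU := by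
        rcases le_or_gt s θN with h1 | h1
        · by_contra hq
          have hsT : s ∈ T := ⟨⟨le_trans hθmem.1 hs.le, h1⟩, (not_le.1 hq).le⟩
          exact absurd (hθub s hsT) (not_le.2 hs)
        · exact (hQmanti θN s hθN.1.le h1.le hst).trans hQmθN
      rw [hfix' s, if_pos hst, hSs_eq s hcs, max_eq_right hQs, hSUc]
    · rw [hVconst s hst, hSUc]
  refine ⟨θ, hθmem, c, hcmem, ?_, ?_, ?_⟩
  · intro s hs
    have h := hA s hs
    simp only [hQmdef, hWdef] at h
    exact h
  · intro s hs
    have h := hB s hs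
    simp only [hMdef, hWdef] at h
    exact h
  · intro s hs
    rw [hB s hs, hA θ le_rfl, hQmθeq, hSUc]
end
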